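/- arXiv:2311.01644 — 5 statements merged into one kernel-verified Lean document; each statement's English description precedes it below -/
import Mathlib

section
/- Define L*(m) = (2/π)·(m·arcsin(1/2) − m²·arcsin(1/(2m))) for positive integers m, so that L*(1) = 0. Let k > n ≥ 1 be integers. Then for all integers ℓ₁, …, ℓ_n ≥ 1 with ℓ₁ + … + ℓ_n ≤ k, the copy-average loss Σ_{i=1}^n L*(ℓ_i) + (1/3)·(k − Σ_{i=1}^n ℓ_i) is at least L*(k − n + 1), with equality if and only if Σ_{i=1}^n ℓ_i = k and all but one of the ℓ_i equal 1 (so the remaining one equals k − n + 1). -/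
open Real

/-- Optimal one-neuron erf approximation error of a unit-orthonormal teacher with
`m` neurons: `L*(m) = (2/π)(m·arcsin(1/2) − m²·arcsin(1/(2m)))`. -/
noncomputable def Lstar (m : ℕ) : ℝ :=
  (2 / π) * ((m : ℝ) * Real.arcsin (1 / 2) - (m : ℝ) ^ 2 * Real.arcsin (1 / (2 * (m : ℝ))))

set_option maxHeartbeats 1000000

section Aux
open Set


lemma sqrt_bound_lo {x : ℝ} (hx0 : 0 ≤ x) (hx1 : x < 1) :
    1 + x^2/2 ≤ 1 / √(1 - x^2) := by
  have h1 : (0:ℝ) < 1 - x^2 := by nlinarith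
  have hs : 0 < √(1 - x^2) := Real.sqrt_pos.2 h1
  rw [le_div_iff₀ hs]
  have key : ((1+x^2/2) * √(1-x^2))^2 = (1+x^2/2)^2 * (1-x^2) := by
    rw [mul_pow, Real.sq_sqrt h1.le]
  nlinarith [key, sq_nonneg ((1 + x^2/2) * √(1-x^2) - 1), sq_nonneg x, sq_nonneg (x*x), sq_nonneg (x^3), mul_pos (mul_pos hs hs) hs]

lemma sqrt_bound_hi {x : ℝ} (hx0 : 0 ≤ x) (hx1 : x ≤ 1/2) :
    1 / √(1 - x^2) ≤ 1 + x^2/2 + x^4/2 := by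
  have h1 : (0:ℝ) < 1 - x^2 := by nlinarith
  have hs : 0 < √(1 - x^2) := Real.sqrt_pos.2 h1
  rw [div_le_iff₀ hs]
  have h2 : x^2 ≤ 1/4 := by nlinarith
  have ht : 0 < (1+x^2/2+x^4/2) * √(1-x^2) := by positivity
  have hsq : 1 ≤ ((1+x^2/2+x^4/2) * √(1-x^2))^2 := by
    rw [mul_pow, Real.sq_sqrt h1.le]
    nlinarith [h2, sq_nonneg x, sq_nonneg (x*x), sq_nonneg (x^3), sq_nonneg (x^4)]
  nlinarith [hsq, ht]

lemma arcsin_lb {u : ℝ} (h0 : 0 ≤ u) (h1 : u ≤ 1/2) : u + u^3/6 ≤ arcsin u := by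
  set F : ℝ → ℝ := fun x => arcsin x - (x + x^3/6) with hF
  have hmono : MonotoneOn F (Icc 0 (1/2)) := by
    apply monotoneOn_of_deriv_nonneg (convex_Icc _ _)
    · exact (Real.continuous_arcsin.continuousOn).sub (by fun_prop)
    · intro x hx
      rw [interior_Icc] at hx
      have hne1 : x ≠ (1:ℝ) := by intro h; rw [h] at hx; norm_num at hx
      have hne1' : x ≠ (-1:ℝ) := by intro h; rw [h] at hx; norm_num at hx
      exact ((Real.differentiableAt_arcsin.2 ⟨hne1', hne1⟩).sub (by fun_prop)).differentiableWithinAt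
    · intro x hx
      rw [interior_Icc] at hx
      obtain ⟨hx0, hx1⟩ := hx
      have hne1 : x ≠ (1:ℝ) := by intro h; rw [h] at hx1; linarith
      have hne1' : x ≠ (-1:ℝ) := by intro h; rw [h] at hx0; linarith
      have hd : HasDerivAt F (1 / √(1 - x^2) - (1 + 3*x^2/6)) x := by
        apply HasDerivAt.sub (Real.hasDerivAt_arcsin hne1' hne1)
        have : HasDerivAt (fun x : ℝ => x + x^3/6) (1 + 3*x^2/6) x := by
          have h1 : HasDerivAt (fun x:ℝ => x) 1 x := hasDerivAt_id x
          have h2 : HasDerivAt (fun x:ℝ => x^3) (3*x^2) x := by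
            simpa using hasDerivAt_pow 3 x
          exact h1.add (h2.div_const 6)
        exact this
      rw [hd.deriv]
      have := sqrt_bound_lo hx0.le (by linarith : x < 1)
      linarith
  have h00 : F 0 = 0 := by simp [hF]
  have := hmono (by constructor <;> norm_num) (⟨h0, h1⟩ : u ∈ Icc (0:ℝ) (1/2)) h0
  rw [h00] at this
  simp only [hF] at this
  linarith

lemma arcsin_ub {u : ℝ} (h0 : 0 ≤ u) (h1 : u ≤ 1/2) : arcsin u ≤ u + u^3/6 + u^5/10 := by
  set F : ℝ → ℝ := fun x => (x + x^3/6 + x^5/10) - arcsin x with hF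
  have hmono : MonotoneOn F (Icc 0 (1/2)) := by
    apply monotoneOn_of_deriv_nonneg (convex_Icc _ _)
    · exact (by fun_prop : ContinuousOn (fun x:ℝ => x + x^3/6 + x^5/10) _).sub Real.continuous_arcsin.continuousOn
    · intro x hx
      rw [interior_Icc] at hx
      have hne1 : x ≠ (1:ℝ) := by intro h; rw [h] at hx; norm_num at hx
      have hne1' : x ≠ (-1:ℝ) := by intro h; rw [h] at hx; norm_num at hx
      exact ((by fun_prop : DifferentiableAt ℝ (fun x:ℝ => x + x^3/6 + x^5/10) x).sub (Real.differentiableAt_arcsin.2 ⟨hne1', hne1⟩)).differentiableWithinAt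
    · intro x hx
      rw [interior_Icc] at hx
      obtain ⟨hx0, hx1⟩ := hx
      have hne1 : x ≠ (1:ℝ) := by intro h; rw [h] at hx1; linarith
      have hne1' : x ≠ (-1:ℝ) := by intro h; rw [h] at hx0; linarith
      have hd : HasDerivAt F ((1 + 3*x^2/6 + 5*x^4/10) - 1 / √(1 - x^2)) x := by
        apply HasDerivAt.sub _ (Real.hasDerivAt_arcsin hne1' hne1)
        have h1 : HasDerivAt (fun x:ℝ => x) 1 x := hasDerivAt_id x
        have h2 : HasDerivAt (fun x:ℝ => x^3) (3*x^2) x := by simpa using hasDerivAt_pow 3 x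
        have h3 : HasDerivAt (fun x:ℝ => x^5) (5*x^4) x := by simpa using hasDerivAt_pow 5 x
        exact (h1.add (h2.div_const 6)).add (h3.div_const 10)
      rw [hd.deriv]
      have := sqrt_bound_hi hx0.le hx1.le
      linarith
  have h00 : F 0 = 0 := by simp [hF]
  have := hmono (by constructor <;> norm_num) (⟨h0, h1⟩ : u ∈ Icc (0:ℝ) (1/2)) h0
  rw [h00] at this
  simp only [hF] at this
  linarith

noncomputable def gg (m : ℕ) : ℝ := (m:ℝ)^2 * Real.arcsin (1/(2*(m:ℝ)))

lemma gg_bounds {m : ℕ} (hm : 1 ≤ m) :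
    (m:ℝ)/2 + 1/(48*m) ≤ gg m ∧ gg m ≤ (m:ℝ)/2 + 1/(48*m) + 1/(320*(m:ℝ)^3) := by
  have hm1 : (1:ℝ) ≤ (m:ℝ) := by exact_mod_cast hm
  have hmp : (0:ℝ) < m := by linarith
  set u : ℝ := 1/(2*(m:ℝ)) with hu
  have hu0 : 0 ≤ u := by positivity
  have hu1 : u ≤ 1/2 := by
    rw [hu, div_le_div_iff₀ (by linarith) (by norm_num)]; linarith
  have e1 : (m:ℝ)^2 * (u + u^3/6) = (m:ℝ)/2 + 1/(48*m) := by
    rw [hu]; field_simp; ring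
  have e2 : (m:ℝ)^2 * (u + u^3/6 + u^5/10) = (m:ℝ)/2 + 1/(48*m) + 1/(320*(m:ℝ)^3) := by
    rw [hu]; field_simp; ring
  constructor
  · rw [← e1]
    exact mul_le_mul_of_nonneg_left (arcsin_lb hu0 hu1) (by positivity)
  · rw [← e2]
    exact mul_le_mul_of_nonneg_left (arcsin_ub hu0 hu1) (by positivity)

lemma gg_one : gg 1 = π/6 := by
  have h : Real.arcsin (1/2) = π/6 := by
    rw [show (1:ℝ)/2 = Real.sin (π/6) by rw [Real.sin_pi_div_six]]
    exact Real.arcsin_sin (by linarith [Real.pi_pos]) (by linarith [Real.pi_pos])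
  unfold gg
  norm_num
  exact h

lemma gg_mono {a b : ℕ} (ha : 1 ≤ a) (hab : a < b) : gg a < gg b := by
  obtain ⟨la, ua⟩ := gg_bounds ha
  obtain ⟨lb, ub⟩ := gg_bounds (le_trans ha hab.le)
  have ha1 : (1:ℝ) ≤ (a:ℝ) := by exact_mod_cast ha
  have hA : (0:ℝ) < (a:ℝ) := by linarith
  have hab1 : (a:ℝ) + 1 ≤ (b:ℝ) := by exact_mod_cast hab
  have hB : (0:ℝ) < (b:ℝ) := by linarith
  have h1 : 0 < 1/(48*(b:ℝ)) := div_pos one_pos (by linarith)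
  have h2 : 1/(48*(a:ℝ)) ≤ 1/48 := by
    rw [div_le_div_iff₀ (by linarith) (by norm_num)]; linarith
  have h3 : 1/(320*(a:ℝ)^3) ≤ 1/320 := by
    rw [div_le_div_iff₀ (by linarith [pow_pos hA 3]) (by norm_num)]
    nlinarith [mul_nonneg (sub_nonneg.2 ha1) (sq_nonneg (a:ℝ)),
      mul_nonneg (sub_nonneg.2 ha1) hA.le]
  linarith

lemma gg_merge_strict {a b : ℕ} (ha : 2 ≤ a) (hb : 2 ≤ b) :
    gg a + gg b < gg (a + b - 1) + gg 1 := by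
  obtain ⟨ua1, ua2⟩ := gg_bounds (by omega : 1 ≤ a)
  obtain ⟨ub1, ub2⟩ := gg_bounds (by omega : 1 ≤ b)
  obtain ⟨uc1, _⟩ := gg_bounds (by omega : 1 ≤ a + b - 1)
  obtain ⟨u11, _⟩ := gg_bounds (le_refl 1)
  norm_num at u11
  have hc : ((a + b - 1 : ℕ) : ℝ) = (a:ℝ) + (b:ℝ) - 1 := by
    have h1 : 1 ≤ a + b := by omega
    push_cast [Nat.cast_sub h1]; ring
  rw [hc] at uc1
  have ha1 : (2:ℝ) ≤ (a:ℝ) := by exact_mod_cast ha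
  have hb1 : (2:ℝ) ≤ (b:ℝ) := by exact_mod_cast hb
  have hA : (0:ℝ) < (a:ℝ) := by linarith
  have hB : (0:ℝ) < (b:ℝ) := by linarith
  have hC : (0:ℝ) < (a:ℝ)+(b:ℝ)-1 := by linarith
  have key : 1/(48*(a:ℝ)) + 1/(320*(a:ℝ)^3) + 1/(48*(b:ℝ)) + 1/(320*(b:ℝ)^3)
      < 1/(48*((a:ℝ)+(b:ℝ)-1)) + 1/48 := by
    have e1 : 1/(320*(a:ℝ)^3) ≤ 1/(1280*(a:ℝ)) := by
      rw [div_le_div_iff₀ (by linarith [pow_pos hA 3]) (by linarith)]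
      nlinarith [mul_nonneg (mul_nonneg (sub_nonneg.2 ha1) hA.le) hA.le,
        mul_nonneg (sub_nonneg.2 ha1) hA.le]
    have e2 : 1/(320*(b:ℝ)^3) ≤ 1/(1280*(b:ℝ)) := by
      rw [div_le_div_iff₀ (by linarith [pow_pos hB 3]) (by linarith)]
      nlinarith [mul_nonneg (mul_nonneg (sub_nonneg.2 hb1) hB.le) hB.le,
        mul_nonneg (sub_nonneg.2 hb1) hB.le]
    have h48 : (0:ℝ) < 1/(48*((a:ℝ)+(b:ℝ)-1)) := div_pos one_pos (by linarith)
    rcases le_or_gt ((a:ℝ)+(b:ℝ)) 5 with h5 | h5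
    · have hr : 1/192 ≤ 1/(48*((a:ℝ)+(b:ℝ)-1)) := by
        rw [div_le_div_iff₀ (by norm_num) (by linarith)]; linarith
      have l1 : 1/(48*(a:ℝ)) ≤ 1/96 := by
        rw [div_le_div_iff₀ (by linarith) (by norm_num)]; linarith
      have l2 : 1/(48*(b:ℝ)) ≤ 1/96 := by
        rw [div_le_div_iff₀ (by linarith) (by norm_num)]; linarith
      have l3 : 1/(1280*(a:ℝ)) ≤ 1/2560 := by
        rw [div_le_div_iff₀ (by linarith) (by norm_num)]; linarith
      have l4 : 1/(1280*(b:ℝ)) ≤ 1/2560 := by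
        rw [div_le_div_iff₀ (by linarith) (by norm_num)]; linarith
      linarith
    · have hub2 : 1/(48*(a:ℝ)) + 1/(1280*(a:ℝ)) + 1/(48*(b:ℝ)) + 1/(1280*(b:ℝ))
          = (1/48+1/1280)*(1/(a:ℝ)+1/(b:ℝ)) := by
        field_simp; ring
      have hab56 : 1/(a:ℝ) + 1/(b:ℝ) ≤ 5/6 := by
        rw [div_add_div _ _ hA.ne' hB.ne', div_le_div_iff₀ (mul_pos hA hB) (by norm_num)]
        nlinarith [mul_nonneg (sub_nonneg.2 ha1) (sub_nonneg.2 hb1)]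
      have := mul_le_mul_of_nonneg_left hab56 (show (0:ℝ) ≤ 1/48+1/1280 by norm_num)
      linarith
  linarith

lemma gg_merge {p a : ℕ} (hp : 1 ≤ p) (ha : 1 ≤ a) :
    gg p + gg a ≤ gg (p + a - 1) + gg 1 ∧
    (gg p + gg a = gg (p + a - 1) + gg 1 ↔ p = 1 ∨ a = 1) := by
  rcases eq_or_lt_of_le hp with h1 | h2
  · have : p + a - 1 = a := by omega
    rw [this, ← h1]
    constructor
    · linarith
    · exact ⟨fun _ => Or.inl rfl, fun _ => by ring⟩
  · rcases eq_or_lt_of_le ha with g1 | g2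
    · have : p + a - 1 = p := by omega
      rw [this, ← g1]
      constructor
      · linarith
      · exact ⟨fun _ => Or.inr rfl, fun _ => by ring⟩
    · have hstrict := gg_merge_strict (by omega : 2 ≤ p) (by omega : 2 ≤ a)
      refine ⟨hstrict.le, ⟨fun h => absurd h (by linarith), fun h => ?_⟩⟩
      rcases h with h | h <;> omega

lemma sum_one_ge {m : ℕ} (f : Fin m → ℕ) (hf : ∀ i, 1 ≤ f i) : m ≤ ∑ i, f i := by
  calc m = ∑ _i : Fin m, 1 := by simp
  _ ≤ ∑ i, f i := Finset.sum_le_sum (fun i _ => hf i)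

lemma sum_eq_card_all_one {m : ℕ} (f : Fin m → ℕ) (hf : ∀ i, 1 ≤ f i)
    (h : ∑ i, f i = m) (i : Fin m) : f i = 1 := by
  by_contra hne
  have h2 : 2 ≤ f i := by have := hf i; omega
  have e1 : ∑ j, f j = f i + ∑ j ∈ Finset.univ.erase i, f j :=
    (Finset.add_sum_erase _ f (Finset.mem_univ i)).symm
  have e2 : (Finset.univ.erase i).card ≤ ∑ j ∈ Finset.univ.erase i, f j := by
    calc (Finset.univ.erase i).card = ∑ _j ∈ Finset.univ.erase i, 1 := by simp
    _ ≤ _ := Finset.sum_le_sum (fun j _ => hf j)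
  have e3 : (Finset.univ.erase i).card = m - 1 := by
    rw [Finset.card_erase_of_mem (Finset.mem_univ i)]; simp
  have hm : 1 ≤ m := i.pos
  omega

lemma key : ∀ (n : ℕ), 1 ≤ n → ∀ (ℓ : Fin n → ℕ), (∀ i, 1 ≤ ℓ i) →
    (∑ i, gg (ℓ i)) ≤ gg ((∑ i, ℓ i) - n + 1) + ((n:ℝ) - 1) * gg 1 ∧
    ((∑ i, gg (ℓ i)) = gg ((∑ i, ℓ i) - n + 1) + ((n:ℝ) - 1) * gg 1 ↔
      ∀ i j, 2 ≤ ℓ i → 2 ≤ ℓ j → i = j) := by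
  intro n
  induction n with
  | zero => omega
  | succ m ih =>
    intro _ ℓ hℓ
    rcases Nat.eq_zero_or_pos m with rfl | hm
    · -- n = 1
      have e : (∑ i, ℓ i) = ℓ 0 := by simp [Fin.sum_univ_one]
      have e2 : (∑ i, gg (ℓ i)) = gg (ℓ 0) := by simp [Fin.sum_univ_one]
      have e3 : ℓ 0 - 1 + 1 = ℓ 0 := by have := hℓ 0; omega
      rw [e, e2, e3]
      push_cast
      constructor
      · linarith
      · exact iff_of_true (by ring) (fun i j _ _ => Subsingleton.elim i j)
    · -- step
      set ℓ' : Fin m → ℕ := fun i => ℓ i.castSucc with hℓ'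
      set a : ℕ := ℓ (Fin.last m) with haa
      have hℓ'1 : ∀ i, 1 ≤ ℓ' i := fun i => hℓ _
      set s' : ℕ := ∑ i, ℓ' i with hs'
      have hsm : m ≤ s' := sum_one_ge ℓ' hℓ'1
      have ha1 : 1 ≤ a := hℓ _
      have hsplit : (∑ i, ℓ i) = s' + a := by
        simp only [hs', haa, hℓ']; exact Fin.sum_univ_castSucc ℓ
      have hsplitg : (∑ i, gg (ℓ i)) = (∑ i, gg (ℓ' i)) + gg a := by
        simp only [haa, hℓ']; exact Fin.sum_univ_castSucc (fun i => gg (ℓ i))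
      obtain ⟨IH1, IH2⟩ := ih hm ℓ' hℓ'1
      obtain ⟨M1, M2⟩ := gg_merge (p := s' - m + 1) (a := a) (by omega) ha1
      have harith : (s' - m + 1) + a - 1 = (s' + a) - (m + 1) + 1 := by omega
      rw [harith] at M1 M2
      have hcast : ((m:ℝ) + 1 - 1) = ((m:ℝ) - 1) + 1 := by ring
      -- inequality
      have hineq : (∑ i, gg (ℓ i)) ≤ gg ((∑ i, ℓ i) - (m+1) + 1) + (((m:ℝ)+1) - 1) * gg 1 := by
        rw [hsplitg, hsplit]
        have := IH1
        nlinarith [M1, IH1]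
      constructor
      · convert hineq using 3
        push_cast; ring
      · rw [show (((m+1:ℕ):ℝ) - 1) = ((m:ℝ)+1) - 1 by push_cast; ring]
        constructor
        · -- equality → at most one big
          intro heq
          have hBC : gg (s' - m + 1) + gg a = gg ((s'+a) - (m+1) + 1) + gg 1 ∧
              (∑ i, gg (ℓ' i)) = gg (s' - m + 1) + ((m:ℝ) - 1) * gg 1 := by
            rw [hsplitg, hsplit] at heq
            constructor <;> nlinarith [IH1, M1, heq]
          have hcond := M2.1 hBC.1
          have hP' := IH2.1 hBC.2
          -- hcond : s' - m + 1 = 1 ∨ a = 1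
          intro i j hi hj
          rcases hcond with hc | hc
          · -- s' = m, all first coords = 1
            have hall : ∀ i : Fin m, ℓ' i = 1 :=
              sum_eq_card_all_one ℓ' hℓ'1 (by omega)
            -- any big index must be last
            have hbig : ∀ i : Fin (m+1), 2 ≤ ℓ i → i = Fin.last m := by
              intro i h2
              by_contra hne
              obtain ⟨i', rfl⟩ := Fin.exists_castSucc_eq.2 hne
              have h9 := hall i'
              simp only [hℓ'] at h9
              omega
            rw [hbig i hi, hbig j hj]
          · -- a = 1: big indices are not last
            have hbig : ∀ i : Fin (m+1), 2 ≤ ℓ i → i ≠ Fin.last m := by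
              intro i h2 hlast
              rw [hlast] at h2; rw [← haa] at h2; omega
            obtain ⟨i', rfl⟩ := Fin.exists_castSucc_eq.2 (hbig i hi)
            obtain ⟨j', rfl⟩ := Fin.exists_castSucc_eq.2 (hbig j hj)
            have : i' = j' := hP' i' j' hi hj
            rw [this]
        · -- at most one big → equality
          intro hP
          have hP' : ∀ i j : Fin m, 2 ≤ ℓ' i → 2 ≤ ℓ' j → i = j := by
            intro i j hi hj
            have := hP i.castSucc j.castSucc hi hj
            exact Fin.castSucc_injective m this
          have hA : (∑ i, gg (ℓ' i)) = gg (s' - m + 1) + ((m:ℝ) - 1) * gg 1 := IH2.2 hP'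
          have hB : gg (s' - m + 1) + gg a = gg ((s'+a) - (m+1) + 1) + gg 1 := by
            apply M2.2
            rcases Nat.lt_or_ge a 2 with h2 | h2
            · right; omega
            · -- a big: all others small, s' = m
              left
              have hall : ∀ i : Fin m, ℓ' i = 1 := by
                intro i
                by_contra hne
                have hbig : 2 ≤ ℓ' i := by have := hℓ'1 i; omega
                have := hP i.castSucc (Fin.last m) hbig h2
                exact absurd this (Fin.castSucc_lt_last i).ne
              have : s' = m := by
                rw [hs']
                calc (∑ i, ℓ' i) = ∑ _i : Fin m, 1 := Finset.sum_congr rfl (fun i _ => hall i)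
                _ = m := by simp
              omega
          rw [hsplitg, hsplit]
          linarith [hA, hB]

end Aux

/-- The copy-average loss `Σ_i L*(ℓ_i) + (1/3)(k − Σ_i ℓ_i)` of a partition
`ℓ₁, …, ℓ_n ≥ 1` with `Σ ℓ_i ≤ k` is at least `L*(k − n + 1)`, with equality iff
`Σ ℓ_i = k` and all but one of the `ℓ_i` equal `1` (the remaining one being
`k − n + 1`): the optimal copy-average configuration is `(n−1)`-copy-`1`-average. -/
theorem optimal_copy_average (k n : ℕ) (hn : 1 ≤ n) (hnk : n < k)
    (ℓ : Fin n → ℕ) (hℓ : ∀ i, 1 ≤ ℓ i) (hsum : ∑ i, ℓ i ≤ k) :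
    Lstar (k - n + 1) ≤ (∑ i, Lstar (ℓ i)) + (1 / 3) * ((k : ℝ) - ∑ i, (ℓ i : ℝ)) ∧
    ((∑ i, Lstar (ℓ i)) + (1 / 3) * ((k : ℝ) - ∑ i, (ℓ i : ℝ)) = Lstar (k - n + 1) ↔
      (∑ i, ℓ i = k ∧ ∃ i₀, (∀ i, i ≠ i₀ → ℓ i = 1) ∧ ℓ i₀ = k - n + 1)) := by
  have hπ : (0:ℝ) < π := Real.pi_pos
  have harcsin : Real.arcsin (1/2) = π/6 := by
    rw [show (1:ℝ)/2 = Real.sin (π/6) by rw [Real.sin_pi_div_six]]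
    exact Real.arcsin_sin (by linarith) (by linarith)
  have hL : ∀ m : ℕ, Lstar m = (1/3)*(m:ℝ) - (2/π)*gg m := by
    intro m
    unfold Lstar gg
    rw [harcsin]
    field_simp
    ring
  set s : ℕ := ∑ i, ℓ i with hs
  have hns : n ≤ s := sum_one_ge ℓ hℓ
  -- sum of Lstar
  have hsumL : (∑ i, Lstar (ℓ i))
      = (1/3)*(∑ i, (ℓ i : ℝ)) - (2/π)*(∑ i, gg (ℓ i)) := by
    rw [Finset.mul_sum, Finset.mul_sum, ← Finset.sum_sub_distrib]
    exact Finset.sum_congr rfl (fun i _ => hL (ℓ i))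
  have hcastS : (∑ i, (ℓ i : ℝ)) = ((s:ℕ):ℝ) := by rw [hs]; push_cast; rfl
  have hkn1 : ((k - n + 1 : ℕ) : ℝ) = (k:ℝ) - (n:ℝ) + 1 := by
    push_cast [Nat.cast_sub hnk.le]; ring
  obtain ⟨K1, K2⟩ := key n hn ℓ hℓ
  have hsn1 : 1 ≤ s - n + 1 := by omega
  have hmle : s - n + 1 ≤ k - n + 1 := by omega
  have hmono : gg (s - n + 1) ≤ gg (k - n + 1) ∧
      (gg (s - n + 1) = gg (k - n + 1) ↔ s = k) := by
    rcases eq_or_lt_of_le hmle with he | hlt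
    · rw [he]
      have hskk : s = k := by omega
      exact ⟨le_refl _, iff_of_true rfl hskk⟩
    · have hlt2 := gg_mono hsn1 hlt
      refine ⟨hlt2.le, ⟨fun h => absurd h hlt2.ne, fun h => by rw [show s - n + 1 = k - n + 1 by omega]⟩⟩
  set G : ℝ := gg (k - n + 1) + ((n:ℝ) - 1) * gg 1 - (∑ i, gg (ℓ i)) with hG
  have hG0 : 0 ≤ G := by rw [hG]; linarith [K1, hmono.1]
  have hTG : (∑ i, Lstar (ℓ i)) + (1 / 3) * ((k : ℝ) - ∑ i, (ℓ i : ℝ)) - Lstar (k - n + 1)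
      = (2/π) * G := by
    rw [hsumL, hL (k - n + 1), hkn1, hG, gg_one, hcastS]
    push_cast
    field_simp
    ring
  constructor
  · linarith [mul_nonneg (by positivity : (0:ℝ) ≤ 2/π) hG0]
  · have h2π : (0:ℝ) < 2/π := by positivity
    have hGiff : (∑ i, Lstar (ℓ i)) + (1 / 3) * ((k : ℝ) - ∑ i, (ℓ i : ℝ)) = Lstar (k - n + 1)
        ↔ G = 0 := by
      constructor
      · intro h
        have : (2/π) * G = 0 := by linarith [hTG]
        exact (mul_eq_zero.1 this).resolve_left (by linarith)
      · intro h
        rw [h, mul_zero] at hTG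
        linarith [hTG]
    rw [hGiff]
    -- G = 0 ↔ Σgg = gg(s-n+1)+(n-1)gg1 ∧ s = k
    have hsandwich : G = 0 ↔
        ((∑ i, gg (ℓ i)) = gg (s - n + 1) + ((n:ℝ) - 1) * gg 1 ∧ s = k) := by
      constructor
      · intro h
        have h1 : (∑ i, gg (ℓ i)) = gg (s - n + 1) + ((n:ℝ) - 1) * gg 1 := by
          rw [hG] at h; linarith [K1, hmono.1]
        have h2 : gg (s - n + 1) = gg (k - n + 1) := by
          rw [hG] at h; linarith [K1, hmono.1]
        exact ⟨h1, hmono.2.1 h2⟩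
      · rintro ⟨h1, h2⟩
        have := hmono.2.2 h2
        rw [hG]; linarith
    rw [hsandwich, K2]
    -- final combinatorial equivalence
    constructor
    · rintro ⟨hP, hsk⟩
      refine ⟨hsk, ?_⟩
      -- there is a big index
      have hex : ∃ i₀, 2 ≤ ℓ i₀ := by
        by_contra h
        push_neg at h
        have hall : ∀ i, ℓ i = 1 := fun i => by have := hℓ i; have := h i; omega
        have : s = n := by
          rw [hs]
          calc (∑ i, ℓ i) = ∑ _i : Fin n, 1 := Finset.sum_congr rfl (fun i _ => hall i)
          _ = n := by simp
        omega
      obtain ⟨i₀, hi₀⟩ := hex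
      have hothers : ∀ i, i ≠ i₀ → ℓ i = 1 := by
        intro i hne
        by_contra h
        have : 2 ≤ ℓ i := by have := hℓ i; omega
        exact hne (hP i i₀ this hi₀)
      refine ⟨i₀, hothers, ?_⟩
      have hdecomp : s = ℓ i₀ + (n - 1) := by
        rw [hs, ← Finset.add_sum_erase _ ℓ (Finset.mem_univ i₀)]
        congr 1
        calc (∑ j ∈ Finset.univ.erase i₀, ℓ j)
            = ∑ _j ∈ Finset.univ.erase i₀, 1 :=
              Finset.sum_congr rfl (fun j hj => hothers j (Finset.mem_erase.1 hj).1)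
          _ = (Finset.univ.erase i₀).card := by simp
          _ = n - 1 := by rw [Finset.card_erase_of_mem (Finset.mem_univ i₀)]; simp
      omega
    · rintro ⟨hsk, i₀, hothers, hval⟩
      have hP : ∀ i j, 2 ≤ ℓ i → 2 ≤ ℓ j → i = j := by
        intro i j hi hj
        have hii : i = i₀ := by
          by_contra h; have := hothers i h; omega
        have hjj : j = i₀ := by
          by_contra h; have := hothers j h; omega
        rw [hii, hjj]
      exact ⟨hP, hsk⟩
end

section
/- Define L*(m) = (2/π)·(m·arcsin(1/2) − m²·arcsin(1/(2m))) for positive integers m. Then for all integers ℓ₂ > ℓ₁ ≥ 1, one has L*(ℓ₂ + 1) − L*(ℓ₂) < L*(ℓ₁ + 1) − L*(ℓ₁). -/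
open Real

noncomputable def gfun (x : ℝ) : ℝ :=
  2 * x * Real.arcsin (1 / (2 * x)) - x / Real.sqrt (4 * x ^ 2 - 1)

noncomputable def Ffun (x : ℝ) : ℝ :=
  x * Real.arcsin (1 / 2) - x ^ 2 * Real.arcsin (1 / (2 * x))

lemma arcsin_gt_cubic {u : ℝ} (hu : 0 < u) (hu1 : u < 1) :
    u + u ^ 3 / 6 < Real.arcsin u := by
  have key : StrictMonoOn (fun x : ℝ => Real.arcsin x - (x + x ^ 3 / 6)) (Set.Icc 0 u) := by
    apply strictMonoOn_of_deriv_pos (convex_Icc 0 u)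
    · exact (Real.continuous_arcsin.sub (by continuity)).continuousOn
    · intro x hx
      rw [interior_Icc] at hx
      have hx0 : 0 < x := hx.1
      have hx1 : x < 1 := lt_trans hx.2 hu1
      have hp : HasDerivAt (fun x : ℝ => x + x ^ 3 / 6) (1 + 3 * x ^ 2 / 6) x := by
        exact ((hasDerivAt_id x).add ((hasDerivAt_pow 3 x).div_const 6)).congr_deriv (by norm_num)
      have hd : HasDerivAt (fun x : ℝ => Real.arcsin x - (x + x ^ 3 / 6))
          (1 / Real.sqrt (1 - x ^ 2) - (1 + 3 * x ^ 2 / 6)) x :=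
        (Real.hasDerivAt_arcsin (by linarith) (by linarith)).sub hp
      rw [hd.deriv]
      set s := Real.sqrt (1 - x ^ 2) with hsdef
      have hs : 0 < s := Real.sqrt_pos.2 (by nlinarith)
      have hs2 : s ^ 2 = 1 - x ^ 2 := Real.sq_sqrt (by nlinarith)
      have h1 : s * (2 + x ^ 2) < 2 := by
        nlinarith [sq_nonneg (s * (2 + x ^ 2) - 2), pow_pos hx0 4, pow_pos hx0 6]
      have h2 : 1 + 3 * x ^ 2 / 6 < 1 / s := by
        rw [lt_div_iff₀ hs]; nlinarith
      linarith
  have h0 := key (Set.left_mem_Icc.2 hu.le) (Set.right_mem_Icc.2 hu.le) hu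
  simpa using h0

lemma hasDerivAt_gfun {x : ℝ} (hx : 1 ≤ x) :
    HasDerivAt gfun (2 * Real.arcsin (1 / (2 * x)) - 2 / Real.sqrt (4 * x ^ 2 - 1)
      + 1 / (Real.sqrt (4 * x ^ 2 - 1)) ^ 3) x := by
  have hx0 : 0 < x := by linarith
  set s := Real.sqrt (4 * x ^ 2 - 1) with hsdef
  have hpos : (0:ℝ) < 4 * x ^ 2 - 1 := by nlinarith
  have hs : 0 < s := Real.sqrt_pos.2 hpos
  have hs2 : s ^ 2 = 4 * x ^ 2 - 1 := Real.sq_sqrt hpos.le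
  have hsu : Real.sqrt (1 - (1 / (2 * x)) ^ 2) = s / (2 * x) := by
    have h : 1 - (1 / (2 * x)) ^ 2 = (s / (2 * x)) ^ 2 := by
      rw [div_pow, div_pow, hs2]; field_simp; ring
    rw [h, Real.sqrt_sq (by positivity)]
  have h0 : HasDerivAt (fun x : ℝ => 2 * x) 2 x := by
    simpa using (hasDerivAt_id x).const_mul 2
  have h1 : HasDerivAt (fun x : ℝ => 1 / (2 * x)) (-(2 / (2 * x) ^ 2)) x := by
    simpa [one_div, neg_div, Pi.inv_def] using h0.inv (by positivity)
  have hne1 : 1 / (2 * x) ≠ -1 := by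
    have : (0:ℝ) < 1 / (2 * x) := by positivity
    intro h; rw [h] at this; linarith
  have hne2 : 1 / (2 * x) ≠ 1 := by
    have : 1 / (2 * x) ≤ 1 / 2 := by
      apply div_le_div_of_nonneg_left one_pos.le two_pos; linarith
    linarith
  have harc : HasDerivAt (fun x : ℝ => Real.arcsin (1 / (2 * x)))
      (1 / Real.sqrt (1 - (1 / (2 * x)) ^ 2) * -(2 / (2 * x) ^ 2)) x :=
    ((Real.hasDerivAt_arcsin hne1 hne2).comp x h1 :)
  have h2 : HasDerivAt (fun x : ℝ => 2 * x * Real.arcsin (1 / (2 * x)))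
      (2 * Real.arcsin (1 / (2 * x))
        + 2 * x * (1 / Real.sqrt (1 - (1 / (2 * x)) ^ 2) * -(2 / (2 * x) ^ 2))) x :=
    h0.mul harc
  have hq : HasDerivAt (fun x : ℝ => 4 * x ^ 2 - 1) (8 * x) x := by
    have := ((hasDerivAt_pow 2 x).const_mul 4).sub_const 1
    exact this.congr_deriv (by norm_num; ring)
  have hsq : HasDerivAt (fun x : ℝ => Real.sqrt (4 * x ^ 2 - 1)) (8 * x / (2 * s)) x :=
    hq.sqrt hpos.ne'
  have hdiv : HasDerivAt (fun x : ℝ => x / Real.sqrt (4 * x ^ 2 - 1))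
      ((1 * s - x * (8 * x / (2 * s))) / s ^ 2) x :=
    (hasDerivAt_id x).div hsq hs.ne'
  have := h2.sub hdiv
  refine this.congr_deriv ?_
  rw [hsu]
  have e1 : 2 * x * (1 / (s / (2 * x)) * -(2 / (2 * x) ^ 2)) = -(2 / s) := by
    field_simp
  have e2 : (1 * s - x * (8 * x / (2 * s))) / s ^ 2 = -(1 / s ^ 3) := by
    field_simp
    linear_combination 2 * hs2
  rw [e1, e2]
  ring

lemma hasDerivAt_Ffun {x : ℝ} (hx : 1 ≤ x) :
    HasDerivAt Ffun (Real.arcsin (1 / 2) - gfun x) x := by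
  have hx0 : 0 < x := by linarith
  set s := Real.sqrt (4 * x ^ 2 - 1) with hsdef
  have hpos : (0:ℝ) < 4 * x ^ 2 - 1 := by nlinarith
  have hs : 0 < s := Real.sqrt_pos.2 hpos
  have hs2 : s ^ 2 = 4 * x ^ 2 - 1 := Real.sq_sqrt hpos.le
  have hsu : Real.sqrt (1 - (1 / (2 * x)) ^ 2) = s / (2 * x) := by
    have h : 1 - (1 / (2 * x)) ^ 2 = (s / (2 * x)) ^ 2 := by
      rw [div_pow, div_pow, hs2]; field_simp; ring
    rw [h, Real.sqrt_sq (by positivity)]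
  have h0 : HasDerivAt (fun x : ℝ => 2 * x) 2 x := by
    simpa using (hasDerivAt_id x).const_mul 2
  have h1 : HasDerivAt (fun x : ℝ => 1 / (2 * x)) (-(2 / (2 * x) ^ 2)) x := by
    simpa [one_div, neg_div, Pi.inv_def] using h0.inv (by positivity)
  have hne1 : 1 / (2 * x) ≠ -1 := by
    have : (0:ℝ) < 1 / (2 * x) := by positivity
    intro h; rw [h] at this; linarith
  have hne2 : 1 / (2 * x) ≠ 1 := by
    have : 1 / (2 * x) ≤ 1 / 2 := by
      apply div_le_div_of_nonneg_left one_pos.le two_pos; linarith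
    linarith
  have harc : HasDerivAt (fun x : ℝ => Real.arcsin (1 / (2 * x)))
      (1 / Real.sqrt (1 - (1 / (2 * x)) ^ 2) * -(2 / (2 * x) ^ 2)) x :=
    ((Real.hasDerivAt_arcsin hne1 hne2).comp x h1 :)
  have hA : HasDerivAt (fun x : ℝ => x * Real.arcsin (1 / 2)) (1 * Real.arcsin (1 / 2)) x :=
    (hasDerivAt_id x).mul_const _
  have hB : HasDerivAt (fun x : ℝ => x ^ 2 * Real.arcsin (1 / (2 * x)))
      (2 * x ^ 1 * Real.arcsin (1 / (2 * x))
        + x ^ 2 * (1 / Real.sqrt (1 - (1 / (2 * x)) ^ 2) * -(2 / (2 * x) ^ 2))) x := by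
    simpa [Pi.mul_def] using (hasDerivAt_pow 2 x).mul harc
  have := hA.sub hB
  refine this.congr_deriv ?_
  rw [hsu]
  have e3 : x ^ 2 * (1 / (s / (2 * x)) * -(2 / (2 * x) ^ 2)) = -(x / s) := by
    field_simp
  rw [e3]
  unfold gfun
  rw [← hsdef]
  ring

lemma gfun_strictMono : StrictMonoOn gfun (Set.Ioi 1) := by
  apply strictMonoOn_of_deriv_pos (convex_Ioi 1)
  · intro x hx
    exact (hasDerivAt_gfun (le_of_lt hx)).differentiableAt.continuousAt.continuousWithinAt
  · intro x hx
    rw [interior_Ioi] at hx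
    rw [(hasDerivAt_gfun hx.le).deriv]
    have hx1 : (1:ℝ) < x := hx
    have hx0 : 0 < x := by linarith
    set s := Real.sqrt (4 * x ^ 2 - 1) with hsdef
    have hpos : (0:ℝ) < 4 * x ^ 2 - 1 := by nlinarith
    have hs : 0 < s := Real.sqrt_pos.2 hpos
    have hs2 : s ^ 2 = 4 * x ^ 2 - 1 := Real.sq_sqrt hpos.le
    have hu0 : 0 < 1 / (2 * x) := by positivity
    have hu1 : 1 / (2 * x) < 1 := by
      rw [div_lt_one (by positivity)]; linarith
    have harc := arcsin_gt_cubic hu0 hu1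
    -- key polynomial inequality
    have key : 24 * x ^ 3 * (8 * x ^ 2 - 3) < s * ((4 * x ^ 2 - 1) * (24 * x ^ 2 + 1)) := by
      apply lt_of_pow_lt_pow_left₀ 2
        (mul_nonneg hs.le (by nlinarith : (0:ℝ) ≤ (4 * x ^ 2 - 1) * (24 * x ^ 2 + 1)))
      have : (s * ((4 * x ^ 2 - 1) * (24 * x ^ 2 + 1))) ^ 2
          = s ^ 2 * ((4 * x ^ 2 - 1) * (24 * x ^ 2 + 1)) ^ 2 := by ring
      rw [this, hs2]
      nlinarith [pow_pos hx0 2, pow_pos hx0 4, pow_pos hx0 6, pow_pos hx0 8, pow_pos hx0 10, sq_nonneg (x^2-1), sq_nonneg (x^4-1)]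
    have h6 : (2 * s ^ 2 - 1) / s ^ 3 < (24 * x ^ 2 + 1) / (24 * x ^ 3) := by
      rw [div_lt_div_iff₀ (by positivity) (by positivity)]
      calc (2 * s ^ 2 - 1) * (24 * x ^ 3) = 24 * x ^ 3 * (8 * x ^ 2 - 3) := by rw [hs2]; ring
        _ < s * ((4 * x ^ 2 - 1) * (24 * x ^ 2 + 1)) := key
        _ = (24 * x ^ 2 + 1) * s ^ 3 := by
            rw [show s ^ 3 = s ^ 2 * s from by ring, hs2]; ring
    have h4 : 2 / s - 1 / s ^ 3 = (2 * s ^ 2 - 1) / s ^ 3 := by field_simp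
    have h5 : 2 * (1 / (2 * x) + (1 / (2 * x)) ^ 3 / 6) = (24 * x ^ 2 + 1) / (24 * x ^ 3) := by
      field_simp; ring
    linarith
  
lemma Ffun_step (ℓ : ℕ) (hℓ : 1 ≤ ℓ) :
    ∃ c ∈ Set.Ioo (ℓ:ℝ) ((ℓ:ℝ) + 1),
      Ffun ((ℓ:ℝ) + 1) - Ffun (ℓ:ℝ) = Real.arcsin (1 / 2) - gfun c := by
  have hℓ1 : (1:ℝ) ≤ (ℓ:ℝ) := by exact_mod_cast hℓ
  obtain ⟨c, hc, hceq⟩ := exists_hasDerivAt_eq_slope Ffun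
    (fun x => Real.arcsin (1 / 2) - gfun x) (by linarith : (ℓ:ℝ) < (ℓ:ℝ) + 1)
    (fun x hx => (hasDerivAt_Ffun (by linarith [hx.1] : (1:ℝ) ≤ x)).differentiableAt.continuousAt.continuousWithinAt)
    (fun x hx => hasDerivAt_Ffun (by linarith [hx.1] : (1:ℝ) ≤ x))
  refine ⟨c, hc, ?_⟩
  rw [hceq]
  simp

/-- The marginal cost of one more teacher neuron is strictly smaller for a student
neuron that already averages more teacher neurons. -/
theorem Lstar_strict_concavity (ℓ₁ ℓ₂ : ℕ) (h₁ : 1 ≤ ℓ₁) (h₁₂ : ℓ₁ < ℓ₂) :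
    Lstar (ℓ₂ + 1) - Lstar ℓ₂ < Lstar (ℓ₁ + 1) - Lstar ℓ₁ := by
  have hrw : ∀ ℓ : ℕ, Lstar (ℓ + 1) - Lstar ℓ
      = (2 / π) * (Ffun ((ℓ:ℝ) + 1) - Ffun (ℓ:ℝ)) := by
    intro ℓ
    simp only [Lstar, Ffun]
    push_cast
    ring
  obtain ⟨c₁, hc₁, e₁⟩ := Ffun_step ℓ₁ h₁
  obtain ⟨c₂, hc₂, e₂⟩ := Ffun_step ℓ₂ (le_of_lt (lt_of_le_of_lt h₁ h₁₂))
  have hℓ₁ : (1:ℝ) ≤ (ℓ₁:ℝ) := by exact_mod_cast h₁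
  have hcast : (ℓ₁:ℝ) + 1 ≤ (ℓ₂:ℝ) := by exact_mod_cast h₁₂
  have hc₁1 : (1:ℝ) < c₁ := lt_of_le_of_lt hℓ₁ hc₁.1
  have hc₂1 : (1:ℝ) < c₂ := by linarith [hc₂.1]
  have hlt : c₁ < c₂ := by linarith [hc₁.2, hc₂.1]
  have hg : gfun c₁ < gfun c₂ := gfun_strictMono hc₁1 hc₂1 hlt
  rw [hrw, hrw, e₁, e₂]
  apply mul_lt_mul_of_pos_left _ (div_pos two_pos Real.pi_pos)
  linarith
end

section
/- Define L*(m) = (2/π)·(m·arcsin(1/2) − m²·arcsin(1/(2m))) for positive integers m. Then for all integers ℓ₁ ≥ 1 and ℓ₀ ≥ 1, one has L*(ℓ₁) + ℓ₀·(2/π)·arcsin(1/2) > L*(ℓ₁ + ℓ₀). -/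
open Real

lemma aux_le_arcsin {t : ℝ} (h0 : 0 ≤ t) (h1 : t ≤ 1) : t ≤ Real.arcsin t := by
  have hs : Real.sin t ≤ t := by
    rcases eq_or_lt_of_le h0 with h | h
    · simp [← h]
    · exact (Real.sin_lt h).le
  calc t = Real.arcsin (Real.sin t) :=
        (Real.arcsin_sin (by linarith [Real.pi_pos]) (by linarith [Real.pi_gt_three])).symm
    _ ≤ Real.arcsin t := Real.monotone_arcsin hs

lemma aux_arcsin_le {t : ℝ} (h0 : 0 < t) (h1 : t < 1) :
    Real.arcsin t ≤ t / Real.sqrt (1 - t ^ 2) := by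
  rw [← Real.tan_arcsin]
  exact (Real.lt_tan (Real.arcsin_pos.mpr h0) (Real.arcsin_lt_pi_div_two.mpr h1)).le

/-- `m² arcsin(1/(2m))` is strictly increasing when going from `n ≥ 1` to `M ≥ n + 1`. -/
lemma aux_key {n M : ℝ} (hn : 1 ≤ n) (hM : n + 1 ≤ M) :
    n ^ 2 * Real.arcsin (1 / (2 * n)) < M ^ 2 * Real.arcsin (1 / (2 * M)) := by
  have hn0 : 0 < n := by linarith
  have hM0 : 0 < M := by linarith
  set t : ℝ := 1 / (2 * n) with ht
  have ht0 : 0 < t := by positivity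
  have ht1 : t < 1 := by
    rw [ht, div_lt_one (by linarith)]; linarith
  set s : ℝ := Real.sqrt (1 - t ^ 2) with hsdef
  have hs2 : s ^ 2 = 1 - t ^ 2 := Real.sq_sqrt (by nlinarith)
  have hs0 : 0 < s := Real.sqrt_pos.mpr (by nlinarith)
  -- upper bound for the left side
  have hub : n ^ 2 * Real.arcsin t ≤ n ^ 2 * (t / s) :=
    mul_le_mul_of_nonneg_left (aux_arcsin_le ht0 ht1) (by positivity)
  -- lower bound for the right side
  have hlb : M / 2 ≤ M ^ 2 * Real.arcsin (1 / (2 * M)) := by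
    have h2M : (0:ℝ) < 2 * M := by linarith
    have := aux_le_arcsin (t := 1 / (2 * M)) (by positivity)
      (by rw [div_le_one h2M]; linarith)
    calc M / 2 = M ^ 2 * (1 / (2 * M)) := by field_simp
      _ ≤ M ^ 2 * Real.arcsin (1 / (2 * M)) :=
          mul_le_mul_of_nonneg_left this (by positivity)
  -- middle strict inequality: n²·t/s < M/2, i.e. n < M·s
  have hmid : n ^ 2 * (t / s) < M / 2 := by
    have hns : n < M * s := by
      have hsq : n ^ 2 < (M * s) ^ 2 := by
        have : (M * s) ^ 2 = M ^ 2 * (1 - t ^ 2) := by rw [mul_pow, hs2]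
        rw [this]
        have ht2 : t ^ 2 = 1 / (4 * n ^ 2) := by rw [ht]; field_simp; ring
        rw [ht2]
        have h4 : (0:ℝ) < 4 * n ^ 2 := by positivity
        have he : M ^ 2 * (1 / (4 * n ^ 2)) * (4 * n ^ 2) = M ^ 2 := by field_simp
        have hMsq : (n + 1) ^ 2 ≤ M ^ 2 := by nlinarith
        have hprod : (n + 1) ^ 2 * (4 * n ^ 2 - 1) ≤ M ^ 2 * (4 * n ^ 2 - 1) :=
          mul_le_mul_of_nonneg_right hMsq (by nlinarith)
        nlinarith [he, h4, hprod, hn, sq_nonneg (n - 1)]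
      exact lt_of_pow_lt_pow_left₀ 2 (by positivity) hsq
    have : n ^ 2 * (t / s) = n / (2 * s) := by
      rw [ht]; field_simp
    rw [this, div_lt_iff₀ (by positivity)]
    nlinarith
  calc n ^ 2 * Real.arcsin t ≤ n ^ 2 * (t / s) := hub
    _ < M / 2 := hmid
    _ ≤ M ^ 2 * Real.arcsin (1 / (2 * M)) := hlb

/-- It is better to average `ℓ₁ + ℓ₀` teacher neurons with one student neuron than to
average `ℓ₁` of them and ignore the remaining `ℓ₀` (error of the zero predictor). -/
theorem Lstar_use_all_teachers (ℓ₁ ℓ₀ : ℕ) (h₁ : 1 ≤ ℓ₁) (h₀ : 1 ≤ ℓ₀) :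
    Lstar (ℓ₁ + ℓ₀) < Lstar ℓ₁ + (ℓ₀ : ℝ) * ((2 / π) * Real.arcsin (1 / 2)) := by
  have hn : (1:ℝ) ≤ (ℓ₁ : ℝ) := by exact_mod_cast h₁
  have hM : (ℓ₁ : ℝ) + 1 ≤ ((ℓ₁ + ℓ₀ : ℕ) : ℝ) := by
    push_cast
    have : (1:ℝ) ≤ (ℓ₀ : ℝ) := by exact_mod_cast h₀
    linarith
  have key := aux_key hn hM
  have hc : 0 < 2 / π := by positivity
  have expand : Lstar ℓ₁ + (ℓ₀ : ℝ) * ((2 / π) * Real.arcsin (1 / 2)) - Lstar (ℓ₁ + ℓ₀) =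
      (2 / π) * (((ℓ₁ + ℓ₀ : ℕ) : ℝ) ^ 2 * Real.arcsin (1 / (2 * ((ℓ₁ + ℓ₀ : ℕ) : ℝ)))
        - (ℓ₁ : ℝ) ^ 2 * Real.arcsin (1 / (2 * (ℓ₁ : ℝ)))) := by
    unfold Lstar
    push_cast
    ring
  have := mul_pos hc (sub_pos.mpr key)
  linarith
end

section
/- For every β with 0 < β ≤ 2 and every x ∈ ℝ, e^{2βx} + e^{βx}·(2 − βx − β²) + 1 − βx + β² > 0. Equivalently, the softplus activation σ_β(x) = (1/β)·log(e^{βx} + 1) satisfies σ_β'(x) − x·σ_β''(x) + σ_β'''(x) > 0 for all x ∈ ℝ. -/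
open Real

/-- The softplus activation `σ_β(x) = (1/β) log(e^{βx} + 1)`. -/
noncomputable def softplus (β x : ℝ) : ℝ := (1 / β) * Real.log (Real.exp (β * x) + 1)


lemma expβ_hasDeriv (β x : ℝ) : HasDerivAt (fun x : ℝ => Real.exp (β * x)) (Real.exp (β * x) * β) x :=
  (Real.hasDerivAt_exp _).comp x (by simpa using (hasDerivAt_id x).const_mul β)

lemma Dpos (β x : ℝ) : (0:ℝ) < Real.exp (β * x) + 1 := by positivity

lemma sp_d1 (β : ℝ) (hβ : β ≠ 0) :
    deriv (softplus β) = fun x => Real.exp (β * x) / (Real.exp (β * x) + 1) := by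
  funext x
  have h : HasDerivAt (softplus β) (Real.exp (β * x) / (Real.exp (β * x) + 1)) x := by
    have h4 : HasDerivAt (fun x => Real.log (Real.exp (β * x) + 1))
        ((Real.exp (β * x) * β) / (Real.exp (β * x) + 1)) x :=
      ((expβ_hasDeriv β x).add_const 1).log (Dpos β x).ne'
    have := h4.const_mul (1 / β)
    refine this.congr_deriv ?_
    field_simp
    try ring
  exact h.deriv

lemma sp_d2 (β : ℝ) (hβ : β ≠ 0) :
    deriv (deriv (softplus β)) = fun x =>
      β * Real.exp (β * x) / (Real.exp (β * x) + 1) ^ 2 := by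
  funext x
  rw [sp_d1 β hβ]
  have h : HasDerivAt (fun x => Real.exp (β * x) / (Real.exp (β * x) + 1))
      (β * Real.exp (β * x) / (Real.exp (β * x) + 1) ^ 2) x := by
    have := (expβ_hasDeriv β x).div ((expβ_hasDeriv β x).add_const 1) (Dpos β x).ne'
    refine this.congr_deriv ?_
    field_simp
    try ring
  exact h.deriv

lemma sp_d3 (β : ℝ) (hβ : β ≠ 0) :
    deriv (deriv (deriv (softplus β))) = fun x =>
      β ^ 2 * Real.exp (β * x) * (1 - Real.exp (β * x)) / (Real.exp (β * x) + 1) ^ 3 := by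
  funext x
  rw [sp_d2 β hβ]
  have h : HasDerivAt (fun x => β * Real.exp (β * x) / (Real.exp (β * x) + 1) ^ 2)
      (β ^ 2 * Real.exp (β * x) * (1 - Real.exp (β * x)) / (Real.exp (β * x) + 1) ^ 3) x := by
    have hn : HasDerivAt (fun x => β * Real.exp (β * x)) (β * (Real.exp (β * x) * β)) x :=
      (expβ_hasDeriv β x).const_mul β
    have hd : HasDerivAt (fun x => (Real.exp (β * x) + 1) ^ 2)
        (2 * (Real.exp (β * x) + 1) ^ 1 * (Real.exp (β * x) * β)) x := by
      exact (HasDerivAt.pow ((expβ_hasDeriv β x).add_const 1) 2).congr_deriv (by norm_num)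
    have := hn.div hd (by positivity)
    refine this.congr_deriv ?_
    have hD := (Dpos β x).ne'
    field_simp
    try ring
  exact h.deriv

/-- For `0 < β ≤ 2`, `e^{2βx} + e^{βx}(2 − βx − β²) + 1 − βx + β² > 0` for all `x`;
equivalently, the softplus activation satisfies `σ_β' − xσ_β'' + σ_β''' > 0`
everywhere. -/
theorem softplus_activation_property (β : ℝ) (hβ : 0 < β) (hβ2 : β ≤ 2) :
    (∀ x : ℝ,
      0 < Real.exp (2 * β * x) + Real.exp (β * x) * (2 - β * x - β ^ 2) +
        1 - β * x + β ^ 2) ∧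
    (∀ x : ℝ,
      0 < deriv (softplus β) x - x * deriv (deriv (softplus β)) x +
        deriv (deriv (deriv (softplus β))) x) := by
  have hβ4 : β ^ 2 ≤ 4 := by nlinarith
  have key : ∀ x : ℝ,
      0 < Real.exp (2 * β * x) + Real.exp (β * x) * (2 - β * x - β ^ 2) +
        1 - β * x + β ^ 2 := by
    intro x
    rw [show 2 * β * x = β * x + β * x by ring, Real.exp_add]
    set t := β * x with hte
    set u := Real.exp t with hue
    have hu0 : 0 < u := Real.exp_pos t
    rcases le_or_gt t 0 with h | h
    · have hu1 : u ≤ 1 := Real.exp_le_one_iff.mpr h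
      nlinarith [mul_pos (by linarith : (0:ℝ) < u + 1) (by linarith : (0:ℝ) < u + 1 - t),
        mul_nonneg (sq_nonneg β) (by linarith : (0:ℝ) ≤ 1 - u)]
    · have hu1 : 1 < u := by nlinarith [Real.add_one_le_exp t]
      have hQ : 0 < u ^ 2 - (2 + t) * u + 5 - t := by
        rcases le_or_gt t (8/5) with h2 | h2
        · nlinarith [sq_nonneg (2 * u - 2 - t), sq_nonneg t]
        · have hu : (1 + t / 4) ^ 4 ≤ u := by
            have h1 : 1 + t / 4 ≤ Real.exp (t / 4) := by
              linarith [Real.add_one_le_exp (t / 4)]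
            have h2' : (1 + t / 4) ^ 4 ≤ Real.exp (t / 4) ^ 4 :=
              pow_le_pow_left₀ (by linarith) h1 4
            have h3 : Real.exp (t / 4) ^ 4 = u := by
              rw [hue, ← Real.exp_nat_mul]
              congr 1
              push_cast
              ring
            linarith
          have he : (1 + t / 4) ^ 4 = 1 + t + (3/8) * t ^ 2 + t ^ 3 / 16 + t ^ 4 / 256 := by
            ring
          rw [he] at hu
          have h1 : (0:ℝ) < u - 2 - t := by
            nlinarith [sq_nonneg (t - 8/5),
              pow_le_pow_left₀ (by norm_num : (0:ℝ) ≤ 8/5) h2.le 3,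
              pow_le_pow_left₀ (by norm_num : (0:ℝ) ≤ 8/5) h2.le 4]
          nlinarith [mul_pos hu0 h1]
      nlinarith [mul_nonneg (by linarith : (0:ℝ) ≤ 4 - β ^ 2) (by linarith : (0:ℝ) ≤ u - 1)]
  refine ⟨key, fun x => ?_⟩
  rw [sp_d3 β hβ.ne', sp_d2 β hβ.ne', sp_d1 β hβ.ne']
  simp only
  have hk := key x
  rw [show 2 * β * x = β * x + β * x by ring, Real.exp_add] at hk
  have hD := Dpos β x
  have heq : Real.exp (β * x) / (Real.exp (β * x) + 1) -
      x * (β * Real.exp (β * x) / (Real.exp (β * x) + 1) ^ 2) +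
      β ^ 2 * Real.exp (β * x) * (1 - Real.exp (β * x)) / (Real.exp (β * x) + 1) ^ 3 =
      Real.exp (β * x) * (Real.exp (β * x) * Real.exp (β * x) +
        Real.exp (β * x) * (2 - β * x - β ^ 2) + 1 - β * x + β ^ 2) /
        (Real.exp (β * x) + 1) ^ 3 := by
    field_simp
    ring
  rw [heq]
  exact div_pos (mul_pos (Real.exp_pos _) hk) (by positivity)
end

section
/- Let σ = σ_β be the softplus activation σ_β(x) = (1/β)·log(e^{βx} + 1) with β > 0, and let Z be a centered Gaussian random variable with variance s² (any s > 0). Then the function x ↦ x · E[σ'(x + Z)] / E[σ(x + Z)] is strictly increasing on ℝ. -/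
open MeasureTheory ProbabilityTheory Real
open scoped NNReal ENNReal

namespace SPAux

noncomputable def lgt (β x : ℝ) : ℝ := Real.exp (β * x) / (Real.exp (β * x) + 1)

noncomputable def lgt' (β x : ℝ) : ℝ := β * Real.exp (β * x) / (Real.exp (β * x) + 1) ^ 2

lemma exp_add_one_pos (β x : ℝ) : 0 < Real.exp (β * x) + 1 := by positivity

variable {β : ℝ}

lemma hasDerivAt_softplus (hβ : 0 < β) (x : ℝ) : HasDerivAt (softplus β) (lgt β x) x := by
  have h1 : HasDerivAt (fun x : ℝ => Real.exp (β * x) + 1) (β * Real.exp (β * x)) x := by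
    simpa [mul_comm] using ((hasDerivAt_id x).const_mul β).exp.add_const 1
  have h2 : HasDerivAt (fun x : ℝ => Real.log (Real.exp (β * x) + 1))
      (β * Real.exp (β * x) / (Real.exp (β * x) + 1)) x :=
    h1.log (exp_add_one_pos β x).ne'
  have := h2.const_mul (1 / β)
  refine this.congr_deriv ?_
  unfold lgt
  field_simp

lemma deriv_softplus (hβ : 0 < β) : deriv (softplus β) = lgt β := by
  funext x; exact (hasDerivAt_softplus hβ x).deriv

lemma hasDerivAt_lgt (x : ℝ) : HasDerivAt (lgt β) (lgt' β x) x := by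
  have h1 : HasDerivAt (fun x : ℝ => Real.exp (β * x)) (β * Real.exp (β * x)) x := by
    simpa [mul_comm] using ((hasDerivAt_id x).const_mul β).exp
  have h2 := h1.div (h1.add_const 1) (exp_add_one_pos β x).ne'
  refine h2.congr_deriv ?_
  unfold lgt'
  field_simp
  ring

lemma softplus_pos (hβ : 0 < β) (x : ℝ) : 0 < softplus β x := by
  have h1 : (1:ℝ) < Real.exp (β * x) + 1 := by linarith [Real.exp_pos (β * x)]
  exact mul_pos (one_div_pos.mpr hβ) (Real.log_pos h1)

lemma lt_softplus (hβ : 0 < β) (x : ℝ) : x < softplus β x := by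
  have h2 : β * x < Real.log (Real.exp (β * x) + 1) :=
    (Real.lt_log_iff_exp_lt (by positivity)).mpr (by linarith [Real.exp_pos (β * x)])
  have h3 := mul_lt_mul_of_pos_left h2 (one_div_pos.mpr hβ)
  have h4 : (1/β) * (β * x) = x := by field_simp
  rw [h4] at h3
  exact h3

lemma softplus_le (hβ : 0 < β) (x : ℝ) : softplus β x ≤ Real.log 2 / β + |x| := by
  have h1 : Real.exp (β * x) + 1 ≤ 2 * Real.exp (β * |x|) := by
    have h2 : Real.exp (β * x) ≤ Real.exp (β * |x|) :=
      Real.exp_le_exp.mpr (mul_le_mul_of_nonneg_left (le_abs_self x) hβ.le)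
    have h3 : (1:ℝ) ≤ Real.exp (β * |x|) := by
      rw [← Real.exp_zero]
      exact Real.exp_le_exp.mpr (mul_nonneg hβ.le (abs_nonneg x))
    linarith
  have h4 : Real.log (Real.exp (β * x) + 1) ≤ Real.log 2 + β * |x| := by
    calc Real.log (Real.exp (β * x) + 1) ≤ Real.log (2 * Real.exp (β * |x|)) :=
          Real.log_le_log (by positivity) h1
    _ = Real.log 2 + β * |x| := by
          rw [Real.log_mul (by norm_num) (Real.exp_pos _).ne', Real.log_exp]
  calc softplus β x = (1/β) * Real.log (Real.exp (β * x) + 1) := rfl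
  _ ≤ (1/β) * (Real.log 2 + β * |x|) := by
      exact mul_le_mul_of_nonneg_left h4 (one_div_pos.mpr hβ).le
  _ = Real.log 2 / β + |x| := by field_simp

lemma lgt_pos (x : ℝ) : 0 < lgt β x := by
  unfold lgt
  have := Real.exp_pos (β * x)
  positivity

lemma lgt_lt_one (x : ℝ) : lgt β x < 1 := by
  unfold lgt
  rw [div_lt_one (exp_add_one_pos β x)]
  linarith

lemma lgt'_pos (hβ : 0 < β) (x : ℝ) : 0 < lgt' β x := by
  unfold lgt'
  exact div_pos (mul_pos hβ (Real.exp_pos _)) (pow_pos (exp_add_one_pos β x) 2)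

lemma lgt'_le (hβ : 0 < β) (x : ℝ) : lgt' β x ≤ β := by
  unfold lgt'
  rw [div_le_iff₀ (by positivity)]
  nlinarith [Real.exp_pos (β * x), sq_nonneg (Real.exp (β * x))]

/-- pointwise log-concavity of softplus -/
lemma logconc (hβ : 0 < β) (x : ℝ) : lgt' β x * softplus β x ≤ (lgt β x) ^ 2 := by
  set E := Real.exp (β * x) with hE
  have hEpos : 0 < E := Real.exp_pos _
  have hL : Real.log (E + 1) ≤ E := by
    have := Real.add_one_le_exp (Real.log (E+1))
    rw [Real.exp_log (by positivity)] at this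
    linarith
  have key : lgt' β x * softplus β x = E * Real.log (E + 1) / (E+1)^2 := by
    unfold lgt' softplus
    rw [← hE]
    field_simp
  rw [key]
  have h2 : (lgt β x)^2 = E^2 / (E+1)^2 := by unfold lgt; rw [← hE]; rw [div_pow]
  rw [h2, div_le_div_iff₀ (by positivity) (by positivity)]
  nlinarith [mul_le_mul_of_nonneg_left hL hEpos.le, sq_nonneg (E+1),
    mul_le_mul_of_nonneg_right (mul_le_mul_of_nonneg_left hL hEpos.le) (sq_nonneg (E+1))]

end SPAux

namespace SPAux

variable {β : ℝ}

/-- monotone likelihood ratio: for u ≤ v, softplus u * lgt v ≤ softplus v * lgt u -/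
lemma ratio_mono (hβ : 0 < β) {u v : ℝ} (huv : u ≤ v) :
    softplus β u * lgt β v ≤ softplus β v * lgt β u := by
  set R : ℝ → ℝ := fun t => Real.log (1 + Real.exp t) * (1 + Real.exp (-t)) with hR
  have hderiv : ∀ t : ℝ, HasDerivAt R (1 - Real.exp (-t) * Real.log (1 + Real.exp t)) t := by
    intro t
    have h1 : HasDerivAt (fun t : ℝ => Real.log (1 + Real.exp t))
        (Real.exp t / (1 + Real.exp t)) t := by
      simpa using ((Real.hasDerivAt_exp t).const_add 1).log
        (by positivity : (1 + Real.exp t) ≠ 0)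
    have h2 : HasDerivAt (fun t : ℝ => 1 + Real.exp (-t)) (-Real.exp (-t)) t := by
      simpa using ((hasDerivAt_id t).neg).exp.const_add 1
    have h3 := h1.mul h2
    refine h3.congr_deriv ?_
    have hpos : (0:ℝ) < 1 + Real.exp t := by positivity
    rw [Real.exp_neg]
    field_simp
    ring
  have hmono : Monotone R := by
    refine monotone_of_deriv_nonneg (fun t => (hderiv t).differentiableAt) (fun t => ?_)
    rw [(hderiv t).deriv]
    have hL : Real.log (1 + Real.exp t) ≤ Real.exp t := by
      have := Real.add_one_le_exp (Real.log (1 + Real.exp t))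
      rw [Real.exp_log (by positivity)] at this
      linarith
    have h4 : Real.exp (-t) * Real.log (1 + Real.exp t) ≤ Real.exp (-t) * Real.exp t :=
      mul_le_mul_of_nonneg_left hL (Real.exp_pos _).le
    rw [← Real.exp_add] at h4
    simp at h4
    linarith
  have hS : ∀ w : ℝ, softplus β w / lgt β w = (1/β) * R (β * w) := by
    intro w
    unfold softplus lgt
    rw [hR]
    simp only []
    rw [Real.exp_neg, add_comm (1:ℝ) (Real.exp (β * w))]
    have hE := Real.exp_pos (β * w)
    rw [div_div_eq_mul_div]
    field_simp
  have h5 : softplus β u / lgt β u ≤ softplus β v / lgt β v := by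
    rw [hS u, hS v]
    exact mul_le_mul_of_nonneg_left (hmono (by nlinarith)) (one_div_pos.mpr hβ).le
  rw [div_le_div_iff₀ (lgt_pos u) (lgt_pos v)] at h5
  linarith

end SPAux

namespace SPAux

open Filter Asymptotics Topology

variable {v : ℝ≥0}

lemma gaussian_density_repr (hv : v ≠ 0) :
    gaussianReal 0 v = volume.withDensity
      (fun z => ((Real.toNNReal (gaussianPDFReal 0 v z) : ℝ≥0) : ℝ≥0∞)) := by
  rw [gaussianReal_of_var_ne_zero _ hv]
  rfl

lemma integral_gaussian_transfer (hv : v ≠ 0) (f : ℝ → ℝ) :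
    ∫ z, f z ∂(gaussianReal 0 v) = ∫ z, gaussianPDFReal 0 v z * f z := by
  rw [gaussian_density_repr hv,
    integral_withDensity_eq_integral_smul
      (measurable_gaussianPDFReal 0 v).real_toNNReal f]
  congr 1
  funext z
  rw [NNReal.smul_def, smul_eq_mul, Real.coe_toNNReal _ (gaussianPDFReal_nonneg 0 v z)]

lemma integrable_gaussian_transfer (hv : v ≠ 0) {f : ℝ → ℝ} (hf : Integrable f (gaussianReal 0 v)) :
    Integrable (fun z => gaussianPDFReal 0 v z * f z) volume := by
  rw [gaussian_density_repr hv] at hf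
  rw [integrable_withDensity_iff_integrable_smul
      (measurable_gaussianPDFReal 0 v).real_toNNReal] at hf
  refine hf.congr (Eventually.of_forall fun z => ?_)
  simp only []
  rw [NNReal.smul_def, smul_eq_mul, Real.coe_toNNReal _ (gaussianPDFReal_nonneg 0 v z)]

lemma gaussianPDFReal_eq (z : ℝ) :
    gaussianPDFReal 0 v z = (Real.sqrt (2 * Real.pi * v))⁻¹ * Real.exp (-(2*(v:ℝ))⁻¹ * z^2) := by
  unfold gaussianPDFReal
  congr 1
  rw [sub_zero]
  congr 1
  rw [neg_div, div_eq_inv_mul, neg_mul]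

/-- integrability of functions with quadratic growth against the Gaussian -/
lemma integrable_gauss_of_le (hv : v ≠ 0) {f : ℝ → ℝ}
    (hmeas : AEStronglyMeasurable f volume) (c₁ c₂ : ℝ)
    (h : ∀ z, |f z| ≤ c₁ + c₂ * z^2) : Integrable f (gaussianReal 0 v) := by
  have hvpos : (0:ℝ) < v := by
    rcases (show (0:ℝ≥0) ≤ v by positivity).lt_or_eq with h' | h'
    · exact_mod_cast h'
    · exact absurd h'.symm hv
  have hb : (0:ℝ) < (2*(v:ℝ))⁻¹ := by positivity
  have i1 : Integrable (fun z : ℝ => Real.exp (-(2*(v:ℝ))⁻¹ * z^2)) volume :=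
    integrable_exp_neg_mul_sq hb
  have i2 : Integrable (fun z : ℝ => z^2 * Real.exp (-(2*(v:ℝ))⁻¹ * z^2)) volume := by
    have := integrable_rpow_mul_exp_neg_mul_sq hb (s := 2) (by norm_num)
    refine this.congr (Eventually.of_forall fun z => ?_)
    simp only [show ∀ x:ℝ, x ^ (2:ℝ) = x ^ 2 from fun x => by
      rw [show (2:ℝ) = ((2:ℕ):ℝ) by norm_num, Real.rpow_natCast]]
  have i3 : Integrable (fun z : ℝ => (Real.sqrt (2 * Real.pi * v))⁻¹ *
      (c₁ * Real.exp (-(2*(v:ℝ))⁻¹ * z^2) + c₂ * (z^2 * Real.exp (-(2*(v:ℝ))⁻¹ * z^2)))) volume :=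
    ((i1.const_mul c₁).add (i2.const_mul c₂)).const_mul _
  have i4 : Integrable (fun z : ℝ => (c₁ + c₂ * z^2) * gaussianPDFReal 0 v z) volume := by
    refine i3.congr (Eventually.of_forall fun z => ?_)
    simp only [gaussianPDFReal_eq]
    ring
  -- transfer
  rw [gaussian_density_repr hv,
    integrable_withDensity_iff_integrable_smul (measurable_gaussianPDFReal 0 v).real_toNNReal]
  have hmeas2 : AEStronglyMeasurable (fun z => gaussianPDFReal 0 v z * f z) volume :=
    (measurable_gaussianPDFReal 0 v).aestronglyMeasurable.mul hmeas
  have i5 : Integrable (fun z => gaussianPDFReal 0 v z * f z) volume := by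
    refine i4.mono hmeas2 (Eventually.of_forall fun z => ?_)
    have hpdf := gaussianPDFReal_nonneg 0 v z
    have habs : |f z| ≤ c₁ + c₂ * z^2 := h z
    have h0 : (0:ℝ) ≤ c₁ + c₂ * z^2 := (abs_nonneg _).trans habs
    rw [Real.norm_eq_abs, Real.norm_eq_abs, abs_mul, abs_of_nonneg hpdf, abs_mul,
      abs_of_nonneg h0, abs_of_nonneg hpdf, mul_comm (c₁ + c₂ * z^2)]
    exact mul_le_mul_of_nonneg_left habs hpdf
  refine i5.congr (Eventually.of_forall fun z => ?_)
  simp only []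
  rw [NNReal.smul_def, smul_eq_mul, Real.coe_toNNReal _ (gaussianPDFReal_nonneg 0 v z)]

end SPAux

namespace SPAux

open Filter Asymptotics Topology

variable {v : ℝ≥0}

lemma v_pos (hv : v ≠ 0) : (0:ℝ) < v := by
  rcases (show (0:ℝ≥0) ≤ v by positivity).lt_or_eq with h' | h'
  · exact_mod_cast h'
  · exact absurd h'.symm hv

lemma hasDerivAt_pdf (hv : v ≠ 0) (z : ℝ) :
    HasDerivAt (gaussianPDFReal 0 v) (-(z/(v:ℝ)) * gaussianPDFReal 0 v z) z := by
  have hvpos := v_pos hv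
  have h1 : HasDerivAt (fun z : ℝ => -(2*(v:ℝ))⁻¹ * z^2) (-(z/(v:ℝ))) z := by
    have := ((hasDerivAt_pow 2 z).const_mul (-(2*(v:ℝ))⁻¹))
    refine this.congr_deriv ?_
    field_simp
    ring
  have h2 := (h1.exp).const_mul (Real.sqrt (2 * Real.pi * v))⁻¹
  have h3 : (fun z : ℝ => (Real.sqrt (2 * Real.pi * v))⁻¹ * Real.exp (-(2*(v:ℝ))⁻¹ * z^2))
      = gaussianPDFReal 0 v := by
    funext z; rw [gaussianPDFReal_eq]
  rw [h3] at h2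
  refine h2.congr_deriv ?_
  rw [gaussianPDFReal_eq]
  ring

lemma tendsto_affine_pdf_atTop (hv : v ≠ 0) (c₁ c₂ : ℝ) :
    Tendsto (fun z => (c₁ + c₂ * |z|) * gaussianPDFReal 0 v z) atTop (𝓝 0) := by
  have hvpos := v_pos hv
  have hb : (0:ℝ) < (2*(v:ℝ))⁻¹ := by positivity
  have h0 : Tendsto (fun x : ℝ => Real.exp (-(1/2:ℝ) * x)) atTop (𝓝 0) :=
    Real.tendsto_exp_atBot.comp (Tendsto.const_mul_atTop_of_neg (by norm_num) tendsto_id)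
  have l1 : Tendsto (fun z : ℝ => z * Real.exp (-(2*(v:ℝ))⁻¹ * z^2)) atTop (𝓝 0) := by
    have := rpow_mul_exp_neg_mul_sq_isLittleO_exp_neg hb (1:ℝ)
    refine (this.trans_tendsto h0).congr' ?_
    filter_upwards [eventually_ge_atTop (0:ℝ)] with z hz
    rw [Real.rpow_one]
  have l0 : Tendsto (fun z : ℝ => Real.exp (-(2*(v:ℝ))⁻¹ * z^2)) atTop (𝓝 0) := by
    have := rpow_mul_exp_neg_mul_sq_isLittleO_exp_neg hb (0:ℝ)
    refine (this.trans_tendsto h0).congr' ?_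
    filter_upwards [eventually_gt_atTop (0:ℝ)] with z hz
    rw [Real.rpow_zero, one_mul]
  have lsum : Tendsto (fun z : ℝ => (Real.sqrt (2 * Real.pi * v))⁻¹ *
      (c₁ * Real.exp (-(2*(v:ℝ))⁻¹ * z^2) + c₂ * (z * Real.exp (-(2*(v:ℝ))⁻¹ * z^2))))
      atTop (𝓝 0) := by
    have := ((l0.const_mul c₁).add (l1.const_mul c₂)).const_mul (Real.sqrt (2 * Real.pi * v))⁻¹
    simpa using this
  refine lsum.congr' ?_
  filter_upwards [eventually_ge_atTop (0:ℝ)] with z hz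
  rw [gaussianPDFReal_eq, abs_of_nonneg hz]
  ring

lemma tendsto_affine_pdf_atBot (hv : v ≠ 0) (c₁ c₂ : ℝ) :
    Tendsto (fun z => (c₁ + c₂ * |z|) * gaussianPDFReal 0 v z) atBot (𝓝 0) := by
  have := (tendsto_affine_pdf_atTop hv c₁ c₂).comp tendsto_neg_atBot_atTop
  refine this.congr fun z => ?_
  simp only [Function.comp]
  rw [abs_neg]
  congr 1
  rw [gaussianPDFReal_eq, gaussianPDFReal_eq, neg_pow]
  norm_num

end SPAux

namespace SPAux

open Filter Asymptotics Topology

variable {v : ℝ≥0}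

/-- Stein's identity / Gaussian integration by parts. -/
lemma stein (hv : v ≠ 0) (g g' : ℝ → ℝ) (hd : ∀ z, HasDerivAt g (g' z) z)
    (c₁ c₂ : ℝ) (hg : ∀ z, |g z| ≤ c₁ + c₂ * |z|)
    (hint1 : Integrable (fun z => z * g z) (gaussianReal 0 v))
    (hint2 : Integrable g' (gaussianReal 0 v)) :
    ∫ z, z * g z ∂(gaussianReal 0 v) = (v:ℝ) * ∫ z, g' z ∂(gaussianReal 0 v) := by
  have hvpos := v_pos hv
  set pdf : ℝ → ℝ := gaussianPDFReal 0 v with hpdf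
  set h : ℝ → ℝ := fun z => g z * pdf z with hh
  set h' : ℝ → ℝ := fun z => pdf z * g' z - (1/(v:ℝ)) * (pdf z * (z * g z)) with hh'
  have hd2 : ∀ z, HasDerivAt h (h' z) z := by
    intro z
    have := (hd z).mul (hasDerivAt_pdf hv z)
    refine this.congr_deriv ?_
    rw [hh']
    field_simp
    ring
  have iA : Integrable (fun z => pdf z * g' z) volume := integrable_gaussian_transfer hv hint2
  have iB : Integrable (fun z => pdf z * (z * g z)) volume := integrable_gaussian_transfer hv hint1
  have iH : Integrable h' volume := iA.sub (iB.const_mul (1/(v:ℝ)))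
  have hnorm : ∀ z, ‖h z‖ ≤ (c₁ + c₂ * |z|) * pdf z := by
    intro z
    rw [hh]
    simp only []
    rw [Real.norm_eq_abs, abs_mul, abs_of_nonneg (gaussianPDFReal_nonneg 0 v z)]
    exact mul_le_mul_of_nonneg_right (hg z) (gaussianPDFReal_nonneg 0 v z)
  have tendTop : Tendsto h atTop (𝓝 0) :=
    squeeze_zero_norm hnorm (tendsto_affine_pdf_atTop hv c₁ c₂)
  have tendBot : Tendsto h atBot (𝓝 0) :=
    squeeze_zero_norm hnorm (tendsto_affine_pdf_atBot hv c₁ c₂)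
  have I1 : ∫ z in Set.Iic (0:ℝ), h' z = h 0 - 0 :=
    integral_Iic_of_hasDerivAt_of_tendsto' (fun z _ => hd2 z) iH.integrableOn tendBot
  have I2 : ∫ z in Set.Ioi (0:ℝ), h' z = 0 - h 0 :=
    integral_Ioi_of_hasDerivAt_of_tendsto' (fun z _ => hd2 z) iH.integrableOn tendTop
  have total : ∫ z, h' z = 0 := by
    rw [← intervalIntegral.integral_Iic_add_Ioi (b := (0:ℝ)) iH.integrableOn iH.integrableOn, I1, I2]
    ring
  have e1 : ∫ z, h' z = (∫ z, pdf z * g' z) - (1/(v:ℝ)) * ∫ z, pdf z * (z * g z) := by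
    rw [hh', integral_sub iA (iB.const_mul (1/(v:ℝ))), integral_const_mul]
  have t1 : ∫ z, g' z ∂(gaussianReal 0 v) = ∫ z, pdf z * g' z :=
    integral_gaussian_transfer hv g'
  have t2 : ∫ z, z * g z ∂(gaussianReal 0 v) = ∫ z, pdf z * (z * g z) :=
    integral_gaussian_transfer hv _
  rw [t1, t2]
  rw [total] at e1
  have := e1.symm
  field_simp at this ⊢
  linarith

end SPAux

namespace SPAux

open Filter Asymptotics Topology

variable {β : ℝ} {v : ℝ≥0}

lemma continuous_softplus : Continuous (softplus β) := by
  unfold softplus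
  have h : ∀ x : ℝ, Real.exp (β * x) + 1 ≠ 0 := fun x => (exp_add_one_pos β x).ne'
  exact continuous_const.mul ((((continuous_const.mul continuous_id).rexp).add
    continuous_const).log h)

lemma continuous_lgt : Continuous (lgt β) := by
  unfold lgt
  exact ((continuous_const.mul continuous_id).rexp).div
    (((continuous_const.mul continuous_id).rexp).add continuous_const)
    (fun x => (exp_add_one_pos β x).ne')

lemma continuous_lgt' : Continuous (lgt' β) := by
  unfold lgt'
  exact (continuous_const.mul (continuous_const.mul continuous_id).rexp).div
    ((((continuous_const.mul continuous_id).rexp).add continuous_const).pow 2)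
    (fun x => (pow_pos (exp_add_one_pos β x) 2).ne')

lemma abs_le_one_add_sq (z : ℝ) : |z| ≤ 1 + z^2 := by nlinarith [abs_nonneg z, sq_abs z]

lemma intF (hβ : 0 < β) (hv : v ≠ 0) (x : ℝ) :
    Integrable (fun z => softplus β (x + z)) (gaussianReal 0 v) := by
  refine integrable_gauss_of_le hv
    ((continuous_softplus.comp (continuous_const.add continuous_id)).aestronglyMeasurable)
    (Real.log 2 / β + |x| + 1) 1 (fun z => ?_)
  have h1 := softplus_le hβ (x + z)
  have h2 : |softplus β (x+z)| = softplus β (x+z) := abs_of_pos (softplus_pos hβ _)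
  have h3 : |x + z| ≤ |x| + |z| := abs_add_le x z
  have h4 := abs_le_one_add_sq z
  rw [h2]; linarith

lemma intP (hv : v ≠ 0) (x : ℝ) :
    Integrable (fun z => lgt β (x + z)) (gaussianReal 0 v) := by
  refine integrable_gauss_of_le hv
    ((continuous_lgt.comp (continuous_const.add continuous_id)).aestronglyMeasurable)
    1 0 (fun z => ?_)
  have := lgt_pos (β := β) (x+z); have := lgt_lt_one (β := β) (x+z)
  rw [abs_of_pos ‹0 < lgt β (x+z)›]; nlinarith

lemma intQ (hβ : 0 < β) (hv : v ≠ 0) (x : ℝ) :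
    Integrable (fun z => lgt' β (x + z)) (gaussianReal 0 v) := by
  refine integrable_gauss_of_le hv
    ((continuous_lgt'.comp (continuous_const.add continuous_id)).aestronglyMeasurable)
    β 0 (fun z => ?_)
  have := lgt'_pos hβ (β := β) (x+z); have := lgt'_le hβ (β := β) (x+z)
  rw [abs_of_pos ‹0 < lgt' β (x+z)›]; nlinarith

lemma intZF (hβ : 0 < β) (hv : v ≠ 0) (x : ℝ) :
    Integrable (fun z => z * softplus β (x + z)) (gaussianReal 0 v) := by
  set c : ℝ := Real.log 2 / β + |x| with hc
  have hc0 : 0 ≤ c := by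
    have : 0 < Real.log 2 / β := div_pos (Real.log_pos (by norm_num)) hβ
    have := abs_nonneg x; rw [hc]; linarith
  refine integrable_gauss_of_le hv
    ((continuous_id.mul (continuous_softplus.comp
      (continuous_const.add continuous_id))).aestronglyMeasurable)
    c (c + 2) (fun z => ?_)
  have h1 := softplus_le hβ (x + z)
  have h2 : 0 < softplus β (x+z) := softplus_pos hβ _
  have h3 : |x + z| ≤ |x| + |z| := abs_add_le x z
  have h4 := abs_le_one_add_sq z
  have h5 : |z * softplus β (x+z)| = |z| * softplus β (x+z) := by
    rw [abs_mul, abs_of_pos h2]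
  rw [h5]
  have h6 : |z| * softplus β (x+z) ≤ |z| * (c + |z|) := by
    apply mul_le_mul_of_nonneg_left _ (abs_nonneg z)
    rw [hc]; linarith
  have h7 : |z| * (c + |z|) ≤ (1 + z^2) * c + z^2 := by
    have : |z| * |z| = z^2 := by rw [← sq_abs]; ring
    nlinarith [abs_nonneg z]
  nlinarith [sq_nonneg z]

lemma intZP (hv : v ≠ 0) (x : ℝ) :
    Integrable (fun z => z * lgt β (x + z)) (gaussianReal 0 v) := by
  refine integrable_gauss_of_le hv
    ((continuous_id.mul (continuous_lgt.comp
      (continuous_const.add continuous_id))).aestronglyMeasurable)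
    1 1 (fun z => ?_)
  have h1 := lgt_pos (β := β) (x+z); have h2 := lgt_lt_one (β := β) (x+z)
  have h4 := abs_le_one_add_sq z
  rw [abs_mul, abs_of_pos h1]
  nlinarith [abs_nonneg z]

lemma int_id (hv : v ≠ 0) : Integrable (fun z : ℝ => z) (gaussianReal 0 v) := by
  refine integrable_gauss_of_le hv aestronglyMeasurable_id 1 1 (fun z => ?_)
  have := abs_le_one_add_sq z; linarith

lemma integral_id_zero (hv : v ≠ 0) : ∫ z, z ∂(gaussianReal 0 v) = 0 := by
  have h := stein hv (fun _ => 1) (fun _ => 0) (fun z => hasDerivAt_const z 1) 1 0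
    (fun z => by norm_num)
    ((int_id hv).congr (Eventually.of_forall fun z => by ring))
    (integrable_const 0)
  simp only [mul_one, integral_const] at h
  simpa using h

lemma integral_pos_of_pos (hv : v ≠ 0) {f : ℝ → ℝ} (hf : Integrable f (gaussianReal 0 v))
    (hpos : ∀ z, 0 < f z) : 0 < ∫ z, f z ∂(gaussianReal 0 v) := by
  rw [integral_pos_iff_support_of_nonneg (fun z => (hpos z).le) hf]
  have : Function.support f = Set.univ := by
    ext z; simp [Function.support, (hpos z).ne']
  rw [this]
  exact Measure.measure_univ_pos.mpr (IsProbabilityMeasure.ne_zero (gaussianReal 0 v))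

end SPAux

namespace SPAux

open Filter Asymptotics Topology Metric

variable {β : ℝ} {v : ℝ≥0}

lemma hasDerivAt_shift_softplus (hβ : 0 < β) (x z : ℝ) :
    HasDerivAt (fun x => softplus β (x + z)) (lgt β (x + z)) x := by
  have h1 : HasDerivAt (fun x : ℝ => x + z) 1 x := (hasDerivAt_id x).add_const z
  exact ((hasDerivAt_softplus hβ (x + z)).comp x h1).congr_deriv (mul_one _)

lemma hasDerivAt_shift_lgt (x z : ℝ) :
    HasDerivAt (fun x => lgt β (x + z)) (lgt' β (x + z)) x := by
  have h1 : HasDerivAt (fun x : ℝ => x + z) 1 x := (hasDerivAt_id x).add_const z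
  exact ((hasDerivAt_lgt (β := β) (x + z)).comp x h1).congr_deriv (mul_one _)

lemma hasDerivAt_shift_softplus' (hβ : 0 < β) (x z : ℝ) :
    HasDerivAt (fun z => softplus β (x + z)) (lgt β (x + z)) z := by
  have h1 : HasDerivAt (fun z : ℝ => x + z) 1 z := (hasDerivAt_id z).const_add x
  exact ((hasDerivAt_softplus hβ (x + z)).comp z h1).congr_deriv (mul_one _)

lemma hasDerivAt_shift_lgt' (x z : ℝ) :
    HasDerivAt (fun z => lgt β (x + z)) (lgt' β (x + z)) z := by
  have h1 : HasDerivAt (fun z : ℝ => x + z) 1 z := (hasDerivAt_id z).const_add x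
  exact ((hasDerivAt_lgt (β := β) (x + z)).comp z h1).congr_deriv (mul_one _)

lemma hasDerivAt_F (hβ : 0 < β) (hv : v ≠ 0) (x : ℝ) :
    HasDerivAt (fun x => ∫ z, softplus β (x + z) ∂(gaussianReal 0 v))
      (∫ z, lgt β (x + z) ∂(gaussianReal 0 v)) x := by
  have := hasDerivAt_integral_of_dominated_loc_of_deriv_le (μ := gaussianReal 0 v)
    (F := fun x z => softplus β (x + z)) (F' := fun x z => lgt β (x + z))
    (x₀ := x) (bound := fun _ => (1:ℝ)) (s := Metric.ball x 1) (Metric.ball_mem_nhds x one_pos)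
    (Eventually.of_forall fun x' => (continuous_softplus.comp
      (continuous_const.add continuous_id)).aestronglyMeasurable)
    (intF hβ hv x)
    ((continuous_lgt.comp (continuous_const.add continuous_id)).aestronglyMeasurable)
    (Eventually.of_forall fun z => fun x' _ => by
      rw [Real.norm_eq_abs, abs_of_pos (lgt_pos _)]
      exact (lgt_lt_one _).le)
    (integrable_const 1)
    (Eventually.of_forall fun z => fun x' _ => hasDerivAt_shift_softplus hβ x' z)
  exact this.2

lemma hasDerivAt_P (hβ : 0 < β) (hv : v ≠ 0) (x : ℝ) :
    HasDerivAt (fun x => ∫ z, lgt β (x + z) ∂(gaussianReal 0 v))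
      (∫ z, lgt' β (x + z) ∂(gaussianReal 0 v)) x := by
  have := hasDerivAt_integral_of_dominated_loc_of_deriv_le (μ := gaussianReal 0 v)
    (F := fun x z => lgt β (x + z)) (F' := fun x z => lgt' β (x + z))
    (x₀ := x) (bound := fun _ => β) (s := Metric.ball x 1) (Metric.ball_mem_nhds x one_pos)
    (Eventually.of_forall fun x' => (continuous_lgt.comp
      (continuous_const.add continuous_id)).aestronglyMeasurable)
    (intP hv x)
    ((continuous_lgt'.comp (continuous_const.add continuous_id)).aestronglyMeasurable)
    (Eventually.of_forall fun z => fun x' _ => by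
      rw [Real.norm_eq_abs, abs_of_pos (lgt'_pos hβ _)]
      exact lgt'_le hβ _)
    (integrable_const β)
    (Eventually.of_forall fun z => fun x' _ => hasDerivAt_shift_lgt x' z)
  exact this.2

lemma stein_F (hβ : 0 < β) (hv : v ≠ 0) (x : ℝ) :
    ∫ z, z * softplus β (x + z) ∂(gaussianReal 0 v)
      = (v:ℝ) * ∫ z, lgt β (x + z) ∂(gaussianReal 0 v) := by
  refine stein hv _ _ (fun z => hasDerivAt_shift_softplus' hβ x z)
    (Real.log 2 / β + |x|) 1 (fun z => ?_) (intZF hβ hv x) (intP hv x)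
  have h1 := softplus_le hβ (x + z)
  have h2 : |softplus β (x+z)| = softplus β (x+z) := abs_of_pos (softplus_pos hβ _)
  have h3 : |x + z| ≤ |x| + |z| := abs_add_le x z
  rw [h2]; linarith

lemma stein_P (hβ : 0 < β) (hv : v ≠ 0) (x : ℝ) :
    ∫ z, z * lgt β (x + z) ∂(gaussianReal 0 v)
      = (v:ℝ) * ∫ z, lgt' β (x + z) ∂(gaussianReal 0 v) := by
  refine stein hv _ _ (fun z => hasDerivAt_shift_lgt' x z)
    1 0 (fun z => ?_) (intZP hv x) (intQ hβ hv x)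
  have h1 := lgt_pos (β := β) (x+z); have h2 := lgt_lt_one (β := β) (x+z)
  rw [abs_of_pos h1]; linarith

/-- Chebyshev/correlation inequality via monotone likelihood ratio. -/
lemma chebyshev (hβ : 0 < β) (hv : v ≠ 0) (x : ℝ) :
    (∫ z, z * lgt β (x + z) ∂(gaussianReal 0 v)) * (∫ z, softplus β (x + z) ∂(gaussianReal 0 v))
    ≤ (∫ z, z * softplus β (x + z) ∂(gaussianReal 0 v)) *
        (∫ z, lgt β (x + z) ∂(gaussianReal 0 v)) := by
  set μ := gaussianReal 0 v with hμ
  set a : ℝ → ℝ := fun z => lgt β (x + z) with ha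
  set b : ℝ → ℝ := fun z => softplus β (x + z) with hb
  set D : ℝ × ℝ → ℝ := fun p => p.1 * b p.1 * a p.2 - p.1 * a p.1 * b p.2 with hD
  have iZB : Integrable (fun z => z * b z) μ := intZF hβ hv x
  have iZA : Integrable (fun z => z * a z) μ := intZP hv x
  have iA : Integrable a μ := intP hv x
  have iB : Integrable b μ := intF hβ hv x
  have i1 : Integrable (fun p : ℝ × ℝ => (p.1 * b p.1) * a p.2) (μ.prod μ) := iZB.mul_prod iA
  have i2 : Integrable (fun p : ℝ × ℝ => (p.1 * a p.1) * b p.2) (μ.prod μ) := iZA.mul_prod iB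
  have iD : Integrable D (μ.prod μ) := by
    refine (i1.sub i2).congr (Eventually.of_forall fun p => ?_)
    simp only [Pi.sub_apply, hD]
  have iDswap : Integrable (fun p : ℝ × ℝ => D p.swap) (μ.prod μ) := iD.swap
  have swap_eq : ∫ p, D p.swap ∂(μ.prod μ) = ∫ p, D p ∂(μ.prod μ) :=
    integral_prod_swap D
  have key : 0 ≤ ∫ p, D p ∂(μ.prod μ) := by
    have pos : ∀ p : ℝ × ℝ, 0 ≤ D p + D p.swap := by
      intro p
      have hDsum : D p + D p.swap
          = (p.1 - p.2) * (b p.1 * a p.2 - a p.1 * b p.2) := by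
        rw [hD]; simp only [Prod.swap]; ring
      rw [hDsum]
      rcases le_total p.2 p.1 with hle | hle
      · have := ratio_mono hβ (by linarith : x + p.2 ≤ x + p.1)
        have h2 : 0 ≤ b p.1 * a p.2 - a p.1 * b p.2 := by
          rw [ha, hb]; simp only []; linarith [this]
        exact mul_nonneg (by linarith) h2
      · have := ratio_mono hβ (by linarith : x + p.1 ≤ x + p.2)
        have h2 : b p.1 * a p.2 - a p.1 * b p.2 ≤ 0 := by
          rw [ha, hb]; simp only []; linarith [this]
        have h1 : p.1 - p.2 ≤ 0 := by linarith
        nlinarith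
    have hnn : 0 ≤ ∫ p, (D p + D p.swap) ∂(μ.prod μ) := integral_nonneg pos
    have sum_eq : ∫ p, (D p + D p.swap) ∂(μ.prod μ)
        = (∫ p, D p ∂(μ.prod μ)) + ∫ p, D p.swap ∂(μ.prod μ) := integral_add iD iDswap
    rw [sum_eq, swap_eq] at hnn
    linarith
  have e1 : ∫ p, D p ∂(μ.prod μ)
      = (∫ z, z * b z ∂μ) * (∫ z, a z ∂μ) - (∫ z, z * a z ∂μ) * (∫ z, b z ∂μ) := by
    have eq1 : ∫ p : ℝ × ℝ, (p.1 * b p.1) * a p.2 ∂(μ.prod μ)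
        = (∫ z, z * b z ∂μ) * (∫ z, a z ∂μ) :=
      integral_prod_mul (f := fun z => z * b z) (g := a)
    have eq2 : ∫ p : ℝ × ℝ, (p.1 * a p.1) * b p.2 ∂(μ.prod μ)
        = (∫ z, z * a z ∂μ) * (∫ z, b z ∂μ) :=
      integral_prod_mul (f := fun z => z * a z) (g := b)
    rw [← eq1, ← eq2, ← integral_sub i1 i2]
  rw [e1] at key
  linarith

end SPAux

open SPAux

/-- For softplus and a centered Gaussian `Z` of variance `s²`, the function
`x ↦ x·E[σ'(x + Z)] / E[σ(x + Z)]` is strictly increasing on `ℝ`. -/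
theorem softplus_smoothed_ratio_strictMono (β : ℝ) (hβ : 0 < β) (s : ℝ) (hs : 0 < s) :
    StrictMono (fun x : ℝ =>
      x * (∫ z, deriv (softplus β) (x + z) ∂gaussianReal 0 (Real.toNNReal (s ^ 2))) /
        ∫ z, softplus β (x + z) ∂gaussianReal 0 (Real.toNNReal (s ^ 2))) := by
  set v : ℝ≥0 := Real.toNNReal (s ^ 2) with hvdef
  have hv : v ≠ 0 := by
    rw [hvdef]
    exact (Real.toNNReal_pos.mpr (by positivity)).ne'
  set μ := gaussianReal 0 v with hμ
  set F : ℝ → ℝ := fun x => ∫ z, softplus β (x + z) ∂μ with hF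
  set P : ℝ → ℝ := fun x => ∫ z, lgt β (x + z) ∂μ with hP
  set Q : ℝ → ℝ := fun x => ∫ z, lgt' β (x + z) ∂μ with hQ
  have hFpos : ∀ x, 0 < F x := fun x =>
    integral_pos_of_pos hv (intF hβ hv x) (fun z => softplus_pos hβ _)
  have hPpos : ∀ x, 0 < P x := fun x =>
    integral_pos_of_pos hv (intP hv x) (fun z => lgt_pos _)
  have hQpos : ∀ x, 0 < Q x := fun x =>
    integral_pos_of_pos hv (intQ hβ hv x) (fun z => lgt'_pos hβ _)
  have hPle1 : ∀ x, P x ≤ 1 := by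
    intro x
    have h1 : P x ≤ ∫ _, (1:ℝ) ∂μ :=
      integral_mono (intP hv x) (integrable_const 1) (fun z => (lgt_lt_one _).le)
    simpa using h1
  have hFgtx : ∀ x, x < F x := by
    intro x
    have hint2 : Integrable (fun z : ℝ => x + z) μ := (integrable_const x).add (int_id hv)
    have h1 : F x - (∫ z, (x + z) ∂μ) = ∫ z, (softplus β (x + z) - (x + z)) ∂μ :=
      (integral_sub (intF hβ hv x) hint2).symm
    have h2 : (∫ z, (x + z) ∂μ) = x := by
      rw [integral_add (integrable_const x) (int_id hv), integral_id_zero hv]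
      simp
    have h3 : 0 < ∫ z, (softplus β (x + z) - (x + z)) ∂μ :=
      integral_pos_of_pos hv ((intF hβ hv x).sub hint2)
        (fun z => sub_pos.mpr (lt_softplus hβ _))
    rw [h2] at h1
    linarith
  have hlogconc : ∀ x, Q x * F x ≤ P x ^ 2 := by
    intro x
    have hvpos := v_pos hv
    have h1 := stein_F hβ hv x
    have h2 := stein_P hβ hv x
    have h3 := chebyshev hβ hv x
    rw [h1, h2] at h3
    have h4 : (v:ℝ) * (Q x * F x) ≤ (v:ℝ) * (P x ^ 2) := by
      rw [hP, hQ, hF]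
      simp only []
      nlinarith [h3]
    exact le_of_mul_le_mul_left h4 hvpos
  have hDeriv : ∀ x, HasDerivAt (fun x => x * P x / F x)
      (((1 * P x + x * Q x) * F x - (x * P x) * P x) / (F x)^2) x := by
    intro x
    have h1 : HasDerivAt (fun x => x * P x) (1 * P x + x * Q x) x :=
      (hasDerivAt_id x).mul (hasDerivAt_P hβ hv x)
    exact h1.div (hasDerivAt_F hβ hv x) (hFpos x).ne'
  have hNpos : ∀ x, 0 < ((1 * P x + x * Q x) * F x - (x * P x) * P x) / (F x)^2 := by
    intro x
    apply div_pos _ (pow_pos (hFpos x) 2)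
    rcases le_or_gt 0 x with hx | hx
    · have h1 : x * P x ≤ x := by
        calc x * P x ≤ x * 1 := mul_le_mul_of_nonneg_left (hPle1 x) hx
        _ = x := mul_one x
      have h2 : 0 < F x - x * P x := by linarith [hFgtx x]
      nlinarith [hPpos x, hQpos x, hFpos x, mul_nonneg (mul_nonneg hx (hQpos x).le) (hFpos x).le]
    · have h1 : 0 ≤ x * (Q x * F x - P x ^ 2) :=
        mul_nonneg_of_nonpos_of_nonpos hx.le (show Q x * F x - P x ^ 2 ≤ 0 by linarith [hlogconc x])
      nlinarith [mul_pos (hPpos x) (hFpos x)]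
  have hSM : StrictMono (fun x => x * P x / F x) :=
    strictMono_of_deriv_pos (fun x => by rw [(hDeriv x).deriv]; exact hNpos x)
  have heq : (fun x : ℝ =>
      x * (∫ z, deriv (softplus β) (x + z) ∂gaussianReal 0 (Real.toNNReal (s ^ 2))) /
        ∫ z, softplus β (x + z) ∂gaussianReal 0 (Real.toNNReal (s ^ 2)))
      = fun x => x * P x / F x := by
    funext x
    rw [hP, hF, hμ, hvdef]
    simp only [deriv_softplus hβ]
  rw [heq]
  exact hSM
end
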